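/- arXiv:math/0508362 — 4 statements merged into one kernel-verified Lean document; each statement's English description precedes it below -/
import Mathlib

section
/- The bivariate generating function identity ∑_{π ∈ S_n} q^{inv(π)} t^{maj(π⁻¹)} = ∑_{π ∈ S_n} q^{maj(π)} t^{maj(π⁻¹)} holds for every positive integer n. -/
open Finset

noncomputable section

/-- The `q`-analogue `[m]_q = 1 + q + ... + q^(m-1)`. -/
def qInt {F : Type} [Field F] (q : F) (m : ℕ) : F := ∑ i ∈ Finset.range m, q ^ i

/-- The `q`-factorial `[m]_q! = [1]_q [2]_q ⋯ [m]_q`. -/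
def qFact {F : Type} [Field F] (q : F) (m : ℕ) : F := ∏ i ∈ Finset.range m, qInt q (i + 1)

/-- Number of inversions of the word `w 0, w 1, ..., w (N-1)`. -/
def wInv (N : ℕ) (w : ℕ → ℤ) : ℕ :=
  ((Finset.range N ×ˢ Finset.range N).filter fun p => p.1 < p.2 ∧ w p.2 < w p.1).card

/-- Descent set (1-indexed) of the word `w 0, ..., w (N-1)`:
`i ∈ [N-1]` is a descent if the i-th letter exceeds the (i+1)-st letter. -/
def wDes (N : ℕ) (w : ℕ → ℤ) : Finset ℕ :=
  (Finset.Ico 1 N).filter fun i => w i < w (i - 1)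

/-- Major index of a word: sum of its descents. -/
def wMaj (N : ℕ) (w : ℕ → ℤ) : ℕ := ∑ i ∈ wDes N w, i

/-- Number of negative letters of a word. -/
def wNeg (N : ℕ) (w : ℕ → ℤ) : ℕ := ((Finset.range N).filter fun i => w i < 0).card

/-- The word `(π(1), ..., π(n))` of a permutation of `[n]`, with values in `[n] ⊆ ℤ`. -/
def sword (n : ℕ) (π : Equiv.Perm (Fin n)) (i : ℕ) : ℤ :=
  if h : i < n then ((π ⟨i, h⟩ : ℕ) : ℤ) + 1 else 0

def sInv (n : ℕ) (π : Equiv.Perm (Fin n)) : ℕ := wInv n (sword n π)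
def sDes (n : ℕ) (π : Equiv.Perm (Fin n)) : Finset ℕ := wDes n (sword n π)
def sMaj (n : ℕ) (π : Equiv.Perm (Fin n)) : ℕ := wMaj n (sword n π)
def sDesNum (n : ℕ) (π : Equiv.Perm (Fin n)) : ℕ := (sDes n π).card

/-- A signed permutation of `[n]`: a permutation `σ` of `ℤ` with `σ(-a) = -σ(a)`
which fixes every integer of absolute value greater than `n`. -/
def IsSigned (n : ℕ) (σ : Equiv.Perm ℤ) : Prop :=
  (∀ a : ℤ, σ (-a) = -σ a) ∧ ∀ a : ℤ, (n : ℤ) < |a| → σ a = a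

abbrev SignedPerm (n : ℕ) := {σ : Equiv.Perm ℤ // IsSigned n σ}

theorem IsSigned.map_zero {n : ℕ} {σ : Equiv.Perm ℤ} (h : IsSigned n σ) : σ 0 = 0 := by
  have h1 := h.1 0
  simp only [neg_zero] at h1
  omega

theorem IsSigned.abs_apply_le {n : ℕ} {σ : Equiv.Perm ℤ} (h : IsSigned n σ) {a : ℤ}
    (ha : |a| ≤ n) : |σ a| ≤ n := by
  by_contra hc
  push_neg at hc
  have h2 : σ (σ a) = σ a := h.2 (σ a) hc
  have h3 : σ a = a := σ.injective h2
  rw [h3] at hc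
  omega

theorem IsSigned.ext {n : ℕ} {σ τ : Equiv.Perm ℤ} (hσ : IsSigned n σ) (hτ : IsSigned n τ)
    (h : ∀ a : ℤ, 1 ≤ a → a ≤ n → σ a = τ a) : σ = τ := by
  apply Equiv.ext
  intro a
  rcases lt_trichotomy a 0 with h1 | h1 | h1
  · by_cases h2 : -(n : ℤ) ≤ a
    · have key := h (-a) (by omega) (by omega)
      have e1 := hσ.1 (-a)
      have e2 := hτ.1 (-a)
      rw [neg_neg] at e1 e2
      rw [e1, e2, key]
    · have habs : (n : ℤ) < |a| := by rw [abs_of_neg h1]; omega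
      rw [hσ.2 a habs, hτ.2 a habs]
  · rw [h1, hσ.map_zero, hτ.map_zero]
  · by_cases h2 : a ≤ n
    · exact h a (by omega) h2
    · have habs : (n : ℤ) < |a| := by rw [abs_of_pos h1]; omega
      rw [hσ.2 a habs, hτ.2 a habs]

noncomputable instance (n : ℕ) : Fintype (SignedPerm n) := by
  have key : ∀ (σ : SignedPerm n) (i : Fin n),
      σ.1 ((i : ℕ) + 1 : ℤ) ∈ Finset.Icc (-(n : ℤ)) (n : ℤ) := by
    intro σ i
    have hi : |((i : ℕ) + 1 : ℤ)| ≤ n := by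
      have := i.2
      rw [abs_of_pos (by omega)]
      omega
    have hb := abs_le.mp (σ.2.abs_apply_le hi)
    rw [Finset.mem_Icc]
    exact hb
  exact Fintype.ofInjective
    (fun σ : SignedPerm n =>
      (fun i : Fin n => (⟨σ.1 ((i : ℕ) + 1 : ℤ), key σ i⟩ :
        {x : ℤ // x ∈ Finset.Icc (-(n : ℤ)) (n : ℤ)})))
    (by
      intro σ τ hfun
      apply Subtype.ext
      apply IsSigned.ext σ.2 τ.2
      intro a ha1 ha2
      have hfin : (a - 1).toNat < n := by omega
      have h2 := congrFun hfun ⟨(a - 1).toNat, hfin⟩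
      rw [Subtype.ext_iff] at h2
      have h3 : (((a - 1).toNat : ℕ) : ℤ) + 1 = a := by omega
      have h2' : σ.1 ((((a - 1).toNat : ℕ) : ℤ) + 1) = τ.1 ((((a - 1).toNat : ℕ) : ℤ) + 1) := h2
      rw [h3] at h2'
      exact h2')

/-- The word `(σ(1), ..., σ(n))` of a signed permutation. -/
def bword (n : ℕ) (σ : Equiv.Perm ℤ) (i : ℕ) : ℤ := σ ((i : ℤ) + 1)

/-- The type-B descent set `Des_B(σ) = {i ∈ [0, n-1] : σ(i) > σ(i+1)}`, with `σ(0) := 0`. -/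
def DesB (n : ℕ) (σ : Equiv.Perm ℤ) : Finset ℕ :=
  (Finset.range n).filter fun i => σ ((i : ℤ) + 1) < (if i = 0 then 0 else σ (i : ℤ))

def bNeg (n : ℕ) (σ : Equiv.Perm ℤ) : ℕ := wNeg n (bword n σ)
def bMaj (n : ℕ) (σ : Equiv.Perm ℤ) : ℕ := wMaj n (bword n σ)

/-- The flag major index `fmaj(σ) = 2 maj(σ(1),...,σ(n)) + neg(σ)`, where the major index is
taken with respect to the order `-n < ... < -1 < 1 < ... < n` (the usual order of `ℤ`). -/
def bFmaj (n : ℕ) (σ : Equiv.Perm ℤ) : ℕ := 2 * bMaj n σ + bNeg n σ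

def bInv (n : ℕ) (σ : Equiv.Perm ℤ) : ℕ := wInv n (bword n σ)

/-- The Coxeter generator `s_i` of `B_n` as a permutation of `ℤ` (for `0 ≤ i ≤ n-1`). -/
def bGen (i : ℕ) : Equiv.Perm ℤ :=
  if i = 0 then Equiv.swap 1 (-1)
  else Equiv.swap (i : ℤ) ((i : ℤ) + 1) * Equiv.swap (-(i : ℤ)) (-((i : ℤ) + 1))

/-- Length of `σ` with respect to a generating set `G`: the minimal length of a word
in the generators expressing `σ`. -/
def coxLen (G : Set (Equiv.Perm ℤ)) (σ : Equiv.Perm ℤ) : ℕ :=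
  sInf {r | ∃ l : List (Equiv.Perm ℤ), l.length = r ∧ (∀ g ∈ l, g ∈ G) ∧ l.prod = σ}

def BGens (n : ℕ) : Set (Equiv.Perm ℤ) := {g | ∃ i < n, g = bGen i}

/-- The Coxeter length on the hyperoctahedral group `B_n`. -/
def lenB (n : ℕ) (σ : Equiv.Perm ℤ) : ℕ := coxLen (BGens n) σ

/-- Coxeter generators of `D_n`: `s_0^D` maps `1 ↦ -2, 2 ↦ -1`, together with `s_1, ..., s_{n-1}`. -/
def DGens (n : ℕ) : Set (Equiv.Perm ℤ) :=
  {g | g = Equiv.swap 1 (-2) * Equiv.swap (-1) 2 ∨ ∃ i, 1 ≤ i ∧ i < n ∧ g = bGen i}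

/-- The Coxeter length on the Weyl group `D_n`. -/
def lenD (n : ℕ) (σ : Equiv.Perm ℤ) : ℕ := coxLen (DGens n) σ

/-- The flag major index of type `D`: `fmaj_D(σ) = fmaj(σ(1),...,σ(n-1),|σ(n)|)`. -/
def fmajD (n : ℕ) (σ : Equiv.Perm ℤ) : ℕ :=
  2 * wMaj n (fun i => if i = n - 1 then |σ ((i : ℤ) + 1)| else σ ((i : ℤ) + 1))
    + wNeg n (fun i => if i = n - 1 then |σ ((i : ℤ) + 1)| else σ ((i : ℤ) + 1))

/-- `S` is a shuffle of the pairwise disjoint sequences in `L`: each sequence of `L` appears in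
`S` in its original order, and `S` is, as a set, the disjoint union of the sequences of `L`. -/
def IsShuffle {α : Type} (S : List α) (L : List (List α)) : Prop :=
  (∀ l ∈ L, l.Sublist S) ∧ (∀ x, x ∈ S ↔ ∃ l ∈ L, x ∈ l) ∧
    S.length = (L.map List.length).sum

/-- The coefficient `α_i(M)` of Theorems 4.2 and 4.4, for `M = {m 1 < ... < m t}`,
`m 0 = 0`, `m (t+1) = n`. The three cases are mutually exclusive, so the sum of the
indicator terms agrees with the case-by-case definition. -/
def alphaB {F : Type} [Field F] (q : F) (t : ℕ) (m : ℕ → ℕ) (i : ℤ) : F :=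
  (if 0 < m 1 ∧ i = (m 1 : ℤ) then q ^ ((m 1 : ℕ) : ℤ) - q ^ (-((m 1 : ℕ) : ℤ)) else 0)
  + ∑ s ∈ Finset.Icc 1 t,
      ((if i = (m (s + 1) : ℤ) then q ^ (-((m s : ℕ) : ℤ)) - q ^ (-((m (s + 1) : ℕ) : ℤ)) else 0)
        + (if i = -((m s : ℤ) + 1) then q ^ ((m (s + 1) : ℕ) : ℤ) - q ^ ((m s : ℕ) : ℤ) else 0))

end

noncomputable section Statements

open Finset RatFunc

local notation "𝕢" => (RatFunc.X : RatFunc ℚ)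


namespace FoataAux

/-- number of inversions of a list of integers -/
def linv : List ℤ → ℕ
  | [] => 0
  | a :: l => l.countP (fun b => decide (b < a)) + linv l

def lmajA : ℕ → List ℤ → ℕ
  | _, [] => 0
  | _, [_] => 0
  | k, a :: b :: t => (if b < a then k + 1 else 0) + lmajA (k + 1) (b :: t)

def lmaj (l : List ℤ) : ℕ := lmajA 0 l

def cross (s t : List ℤ) : ℕ := (s.map fun a => t.countP (fun b => decide (b < a))).sum

theorem cross_nil_left (t : List ℤ) : cross [] t = 0 := rfl

theorem cross_cons_left (a : ℤ) (s t : List ℤ) :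
    cross (a :: s) t = t.countP (fun b => decide (b < a)) + cross s t := by
  simp [cross]

theorem cross_perm_right {t t' : List ℤ} (s : List ℤ) (h : t.Perm t') : cross s t = cross s t' := by
  unfold cross
  congr 1
  apply List.map_congr_left
  intro a _
  exact h.countP_eq _

theorem cross_cons_right (s : List ℤ) (a : ℤ) (t : List ℤ) :
    cross s (a :: t) = s.countP (fun b => decide (a < b)) + cross s t := by
  induction s with
  | nil => rfl
  | cons c s ih =>
    rw [cross_cons_left, cross_cons_left, ih, List.countP_cons, List.countP_cons]
    by_cases h : a < c <;> simp [h] <;> omega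

theorem cross_nil_right (s : List ℤ) : cross s [] = 0 := by
  induction s with
  | nil => rfl
  | cons a s ih => rw [cross_cons_left, ih]; simp

theorem linv_append (s t : List ℤ) : linv (s ++ t) = linv s + linv t + cross s t := by
  induction s with
  | nil => simp [linv, cross_nil_left]
  | cons a s ih =>
    show linv (a :: (s ++ t)) = _
    rw [linv, List.countP_append, ih, linv, cross_cons_left]
    ring

theorem linv_concat (l : List ℤ) (x : ℤ) :
    linv (l ++ [x]) = linv l + l.countP (fun b => decide (x < b)) := by
  rw [linv_append]
  have h1 : linv [x] = 0 := rfl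
  rw [h1]
  have : cross l [x] = l.countP (fun b => decide (x < b)) := by
    rw [cross_cons_right, cross_nil_right]; omega
  omega

theorem lmajA_concat (x : ℤ) : ∀ (l : List ℤ) (a : ℤ) (k : ℕ),
    lmajA k ((a :: l) ++ [x]) =
      lmajA k (a :: l) + (if x < (a :: l).getLast (by simp) then k + (a :: l).length else 0) := by
  intro l
  induction l with
  | nil =>
    intro a k
    simp only [List.nil_append, List.getLast_singleton, List.length_cons, List.length_nil]
    show (if x < a then k + 1 else 0) + lmajA (k+1) [x] = _
    by_cases h : x < a <;> simp [h, lmajA]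
  | cons b t ih =>
    intro a k
    show (if b < a then k + 1 else 0) + lmajA (k + 1) ((b :: t) ++ [x]) = _
    rw [ih b (k + 1)]
    have h1 : (a :: b :: t).getLast (by simp) = (b :: t).getLast (by simp) := by
      rw [List.getLast_cons]
    rw [h1]
    show _ = (if b < a then k + 1 else 0) + lmajA (k + 1) (b :: t) + _
    by_cases h2 : x < (b :: t).getLast (by simp) <;> simp [h2, List.length_cons] <;> omega

theorem lmaj_concat (l : List ℤ) (h : l ≠ []) (x : ℤ) :
    lmaj (l ++ [x]) = lmaj l + (if x < l.getLast h then l.length else 0) := by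
  obtain ⟨a, t, rfl⟩ := List.exists_cons_of_ne_nil h
  have := lmajA_concat x t a 0
  simpa [lmaj] using this

/-- One pass of Foata's cycling: splits `v` into factors ending at letters failing `p`,
and rotates the last letter of each factor to its front. `acc` is the p-run read so far. -/
def cycAux (p : ℤ → Bool) : List ℤ → List ℤ → List ℤ
  | acc, [] => acc
  | acc, a :: l => if p a then cycAux p (acc ++ [a]) l else (a :: acc) ++ cycAux p [] l

theorem cycAux_perm (p : ℤ → Bool) : ∀ (v acc : List ℤ), (cycAux p acc v).Perm (acc ++ v) := by
  intro v
  induction v with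
  | nil => intro acc; simp [cycAux]
  | cons a l ih =>
    intro acc
    rw [cycAux]
    by_cases h : p a
    · simp only [h, if_true]
      refine (ih (acc ++ [a])).trans ?_
      simp
    · simp only [h, if_false]
      have h2 := ih []
      simp only [List.nil_append] at h2
      refine (List.Perm.append_left (a :: acc) h2).trans ?_
      show (a :: (acc ++ l)).Perm (acc ++ a :: l)
      exact (List.perm_middle).symm

theorem cycAux_head (p : ℤ → Bool) : ∀ (v acc : List ℤ) (hv : v ≠ []),
    p (v.getLast hv) = false → ∃ a t, cycAux p acc v = a :: t ∧ p a = false := by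
  intro v
  induction v with
  | nil => intro acc hv; exact absurd rfl hv
  | cons a l ih =>
    intro acc hv hlast
    rw [cycAux]
    by_cases h : p a
    · have hl : l ≠ [] := by
        rintro rfl
        simp only [List.getLast_singleton] at hlast
        rw [hlast] at h; exact Bool.noConfusion h
      have : (a :: l).getLast hv = l.getLast hl := List.getLast_cons hl
      rw [this] at hlast
      simp only [h, if_true]
      exact ih (acc ++ [a]) hl hlast
    · simp only [h, if_false]
      exact ⟨a, acc ++ cycAux p [] l, rfl, by simp [h]⟩

/-- inverse of the cycling pass -/
def uncyc (p : ℤ → Bool) : List ℤ → List ℤ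
  | [] => []
  | a :: l => l.takeWhile p ++ ([a] ++ uncyc p (l.dropWhile p))
termination_by l => l.length
decreasing_by
  simp only [List.length_cons]
  exact Nat.lt_succ_of_le (List.dropWhile_sublist p).length_le

theorem takeWhile_all_append (p : ℤ → Bool) : ∀ (s t : List ℤ), (∀ b ∈ s, p b = true) →
    (s ++ t).takeWhile p = s ++ t.takeWhile p ∧ (s ++ t).dropWhile p = t.dropWhile p := by
  intro s
  induction s with
  | nil => intro t _; simp
  | cons a s ih =>
    intro t h
    have ha : p a = true := h a (by simp)
    have := ih t (fun b hb => h b (by simp [hb]))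
    constructor
    · simp only [List.cons_append, List.takeWhile_cons, ha, if_true, this.1]
    · simp only [List.cons_append, List.dropWhile_cons, ha, if_true, this.2]

theorem uncyc_cycAux (p : ℤ → Bool) : ∀ (v acc : List ℤ), (∀ b ∈ acc, p b = true) →
    (v = [] → acc = []) → (∀ hv : v ≠ [], p (v.getLast hv) = false) →
    uncyc p (cycAux p acc v) = acc ++ v := by
  intro v
  induction v with
  | nil =>
    intro acc _ h2 _
    rw [h2 rfl]
    show uncyc p (cycAux p [] []) = _
    rw [cycAux, uncyc]
    rfl
  | cons a l ih =>
    intro acc h1 _ h3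
    rw [cycAux]
    by_cases h : p a
    · have hl : l ≠ [] := by
        rintro rfl
        have := h3 (by simp)
        simp only [List.getLast_singleton] at this
        rw [this] at h; exact Bool.noConfusion h
      simp only [h, if_true]
      rw [ih (acc ++ [a]) ?_ (fun hc => absurd hc hl) ?_]
      · simp
      · intro b hb
        rcases List.mem_append.mp hb with hb | hb
        · exact h1 b hb
        · simp only [List.mem_singleton] at hb; subst hb; exact h
      · intro hv
        have := h3 (by simp)
        rwa [List.getLast_cons hl] at this
    · simp only [h, if_false]
      rcases eq_or_ne l [] with rfl | hl
      · show uncyc p (a :: (acc ++ cycAux p [] [])) = _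
        rw [uncyc]
        show (acc ++ []).takeWhile p ++ ([a] ++ uncyc p ((acc ++ []).dropWhile p)) = _
        simp only [List.append_nil]
        have ht := takeWhile_all_append p acc [] h1
        simp only [List.append_nil] at ht
        rw [ht.1, ht.2]
        simp [uncyc]
      · have hlast : p (l.getLast hl) = false := by
          have := h3 (by simp)
          rwa [List.getLast_cons hl] at this
        obtain ⟨c, t, hct, hc⟩ := cycAux_head p l [] hl hlast
        show uncyc p (a :: (acc ++ cycAux p [] l)) = _
        rw [uncyc]
        have ht := takeWhile_all_append p acc (cycAux p [] l) h1
        rw [ht.1, ht.2, hct]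
        simp only [List.takeWhile_cons, List.dropWhile_cons, hc]
        simp only [Bool.false_eq_true, if_false]
        rw [← hct, ih [] (by simp) (fun hc' => absurd hc' hl) (fun _ => hlast)]
        simp

end FoataAux
namespace FoataAux

def pGt (x : ℤ) : ℤ → Bool := fun b => decide (x < b)
def pLe (x : ℤ) : ℤ → Bool := fun b => decide (b ≤ x)

theorem linv_cycAux_pGt (x : ℤ) : ∀ (v acc : List ℤ), (∀ b ∈ acc, pGt x b = true) →
    (v = [] → acc = []) → (∀ hv : v ≠ [], pGt x (v.getLast hv) = false) →
    linv (cycAux (pGt x) acc v) + (acc ++ v).countP (pGt x) = linv (acc ++ v) := by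
  intro v
  induction v with
  | nil =>
    intro acc _ h2 _
    rw [h2 rfl]
    rfl
  | cons a l ih =>
    intro acc h1 _ h3
    rw [cycAux]
    by_cases h : pGt x a
    · have hl : l ≠ [] := by
        rintro rfl
        have := h3 (by simp)
        simp only [List.getLast_singleton] at this
        rw [this] at h; exact Bool.noConfusion h
      rw [if_pos h]
      have ihh := ih (acc ++ [a]) ?_ (fun hc => absurd hc hl) ?_
      · have e : (acc ++ [a]) ++ l = acc ++ a :: l := by simp
        rwa [e] at ihh
      · intro b hb
        rcases List.mem_append.mp hb with hb | hb
        · exact h1 b hb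
        · simp only [List.mem_singleton] at hb; subst hb; exact h
      · intro hv
        have := h3 (by simp)
        rwa [List.getLast_cons hl] at this
    · rw [if_neg h]
      have hax : ¬ x < a := by simpa [pGt] using h
      have hperm : (cycAux (pGt x) [] l).Perm l := by simpa using cycAux_perm (pGt x) l []
      have ihh : linv (cycAux (pGt x) [] l) + l.countP (pGt x) = linv l := by
        have := ih [] (by simp) (by simp) ?_
        · simpa using this
        · intro hv
          have := h3 (by simp)
          rwa [List.getLast_cons hv] at this
      set w := cycAux (pGt x) [] l with hw
      have e1 : linv ((a :: acc) ++ w) = linv (a :: acc) + linv w + cross (a :: acc) w :=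
        linv_append _ _
      have e2 : cross (a :: acc) w = cross (a :: acc) l := cross_perm_right _ hperm
      have e3 : cross (a :: acc) l = l.countP (fun b => decide (b < a)) + cross acc l :=
        cross_cons_left _ _ _
      have e4 : linv (a :: acc) = acc.countP (fun b => decide (b < a)) + linv acc := rfl
      have e5 : acc.countP (fun b => decide (b < a)) = 0 := by
        rw [List.countP_eq_zero]
        intro b hb
        have := h1 b hb
        simp only [pGt, decide_eq_true_eq] at this
        simp only [decide_eq_true_eq]
        omega
      have e6 : (acc ++ a :: l).countP (pGt x) = acc.length + l.countP (pGt x) := by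
        rw [List.countP_append, List.countP_cons, List.countP_eq_length.mpr h1]
        simp [h]
      have e7 : acc.countP (fun b => decide (a < b)) = acc.length := by
        rw [List.countP_eq_length]
        intro b hb
        have := h1 b hb
        simp only [pGt, decide_eq_true_eq] at this
        simp only [decide_eq_true_eq]
        omega
      have e8 : linv (acc ++ a :: l) = linv acc + linv (a :: l) + cross acc (a :: l) :=
        linv_append _ _
      have e9 : cross acc (a :: l) = acc.countP (fun b => decide (a < b)) + cross acc l :=
        cross_cons_right _ _ _
      have e10 : linv (a :: l) = l.countP (fun b => decide (b < a)) + linv l := rfl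
      omega

theorem linv_cycAux_pLe (x : ℤ) : ∀ (v acc : List ℤ), (∀ b ∈ acc, pLe x b = true) →
    (v = [] → acc = []) → (∀ hv : v ≠ [], pLe x (v.getLast hv) = false) →
    linv (cycAux (pLe x) acc v) = linv (acc ++ v) + (acc ++ v).countP (pLe x) := by
  intro v
  induction v with
  | nil =>
    intro acc _ h2 _
    rw [h2 rfl]
    rfl
  | cons a l ih =>
    intro acc h1 _ h3
    rw [cycAux]
    by_cases h : pLe x a
    · have hl : l ≠ [] := by
        rintro rfl
        have := h3 (by simp)
        simp only [List.getLast_singleton] at this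
        rw [this] at h; exact Bool.noConfusion h
      rw [if_pos h]
      have ihh := ih (acc ++ [a]) ?_ (fun hc => absurd hc hl) ?_
      · have e : (acc ++ [a]) ++ l = acc ++ a :: l := by simp
        rwa [e] at ihh
      · intro b hb
        rcases List.mem_append.mp hb with hb | hb
        · exact h1 b hb
        · simp only [List.mem_singleton] at hb; subst hb; exact h
      · intro hv
        have := h3 (by simp)
        rwa [List.getLast_cons hl] at this
    · rw [if_neg h]
      have hax : x < a := by simpa [pLe] using h
      have hperm : (cycAux (pLe x) [] l).Perm l := by simpa using cycAux_perm (pLe x) l []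
      have ihh : linv (cycAux (pLe x) [] l) = linv l + l.countP (pLe x) := by
        have := ih [] (by simp) (by simp) ?_
        · simpa using this
        · intro hv
          have := h3 (by simp)
          rwa [List.getLast_cons hv] at this
      set w := cycAux (pLe x) [] l with hw
      have e1 : linv ((a :: acc) ++ w) = linv (a :: acc) + linv w + cross (a :: acc) w :=
        linv_append _ _
      have e2 : cross (a :: acc) w = cross (a :: acc) l := cross_perm_right _ hperm
      have e3 : cross (a :: acc) l = l.countP (fun b => decide (b < a)) + cross acc l :=
        cross_cons_left _ _ _
      have e4 : linv (a :: acc) = acc.countP (fun b => decide (b < a)) + linv acc := rfl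
      have e5 : acc.countP (fun b => decide (b < a)) = acc.length := by
        rw [List.countP_eq_length]
        intro b hb
        have := h1 b hb
        simp only [pLe, decide_eq_true_eq] at this
        simp only [decide_eq_true_eq]
        omega
      have e6 : (acc ++ a :: l).countP (pLe x) = acc.length + l.countP (pLe x) := by
        rw [List.countP_append, List.countP_cons, List.countP_eq_length.mpr h1]
        simp [h]
      have e7 : acc.countP (fun b => decide (a < b)) = 0 := by
        rw [List.countP_eq_zero]
        intro b hb
        have := h1 b hb
        simp only [pLe, decide_eq_true_eq] at this
        simp only [decide_eq_true_eq]
        omega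
      have e8 : linv (acc ++ a :: l) = linv acc + linv (a :: l) + cross acc (a :: l) :=
        linv_append _ _
      have e9 : cross acc (a :: l) = acc.countP (fun b => decide (a < b)) + cross acc l :=
        cross_cons_right _ _ _
      have e10 : linv (a :: l) = l.countP (fun b => decide (b < a)) + linv l := rfl
      omega

/-- Foata's γ_x map. -/
def gamma (x : ℤ) (v : List ℤ) : List ℤ :=
  if h : v = [] then [] else
  if x < v.getLast h then cycAux (pLe x) [] v else cycAux (pGt x) [] v

theorem gamma_perm (x : ℤ) (v : List ℤ) : (gamma x v).Perm v := by
  unfold gamma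
  by_cases h : v = []
  · simp [h]
  · simp only [h, dif_neg, not_false_iff]
    by_cases h2 : x < v.getLast h <;> simp only [h2, if_true, if_false] <;>
      simpa using cycAux_perm _ v []

/-- Foata's bijection, acting on the reversed word. -/
def phiR : List ℤ → List ℤ
  | [] => []
  | x :: r => gamma x (phiR r) ++ [x]

theorem phiR_perm : ∀ r : List ℤ, (phiR r).Perm r := by
  intro r
  induction r with
  | nil => exact List.Perm.refl _
  | cons x r ih =>
    show (gamma x (phiR r) ++ [x]).Perm (x :: r)
    refine ((gamma_perm x (phiR r)).append_right [x]).trans ?_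
    refine (ih.append_right [x]).trans ?_
    exact List.perm_append_singleton x r

theorem linv_phiR : ∀ r : List ℤ, linv (phiR r) = lmaj r.reverse := by
  intro r
  induction r with
  | nil => rfl
  | cons x r ih =>
    rcases eq_or_ne r [] with rfl | hr
    · show linv (gamma x (phiR []) ++ [x]) = lmaj [x].reverse
      show linv (gamma x [] ++ [x]) = lmaj [x].reverse
      rw [show gamma x [] = [] from by simp [gamma]]
      rfl
    · set v := phiR r with hv
      have hvne : v ≠ [] := by
        intro hc
        have := (phiR_perm r).length_eq
        rw [← hv, hc] at this
        exact hr (List.length_eq_zero_iff.mp this.symm)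
      obtain ⟨y, r2, rfl⟩ := List.exists_cons_of_ne_nil hr
      have hunfold : phiR (y :: r2) = gamma y (phiR r2) ++ [y] := rfl
      have hlastv : v.getLast hvne = y := by
        have h1 : v.getLast? = some y := by
          rw [hv, hunfold, List.getLast?_concat]
        rw [List.getLast?_eq_getLast hvne] at h1
        injection h1
      have hrevne : (y :: r2).reverse ≠ [] := by simp
      have hlastrev : (y :: r2).reverse.getLast hrevne = y := by
        have h1 : (y :: r2).reverse.getLast? = some y := by
          rw [List.reverse_cons, List.getLast?_concat]
        rw [List.getLast?_eq_getLast hrevne] at h1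
        injection h1
      have hlen2 : (y :: r2).reverse.length = v.length := by
        rw [List.length_reverse, hv, (phiR_perm (y :: r2)).length_eq]
      have ih' : linv v = lmaj ((y :: r2).reverse) := by rw [hv]; exact ih
      have hccat : linv (phiR (x :: y :: r2)) = linv (gamma x v) + v.countP (pGt x) := by
        show linv (gamma x v ++ [x]) = _
        rw [linv_concat, (gamma_perm x v).countP_eq]
        rfl
      by_cases hxy : x < y
      · have hmaj : lmaj ((x :: y :: r2).reverse) = lmaj ((y :: r2).reverse) + v.length := by
          rw [show (x :: y :: r2).reverse = (y :: r2).reverse ++ [x] from List.reverse_cons,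
            lmaj_concat _ hrevne x, hlastrev, if_pos hxy, hlen2]
        have hg : gamma x v = cycAux (pLe x) [] v := by
          unfold gamma
          rw [dif_neg hvne, if_pos (by rwa [hlastv])]
        have key : linv (cycAux (pLe x) [] v) = linv v + v.countP (pLe x) := by
          have := linv_cycAux_pLe x v [] (by simp) (by simp [hvne]) ?_
          · simpa using this
          · intro hv'
            rw [hlastv]
            simp only [pLe, decide_eq_false_iff_not, not_le]
            exact hxy
        have hsplit : v.countP (pLe x) + v.countP (pGt x) = v.length := by
          have h0 : v.countP (pGt x) = v.countP (fun b => ¬ (pLe x b)) := by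
            apply List.countP_congr
            intro b _
            simp only [pGt, pLe, decide_eq_true_eq, Bool.not_eq_true',
              decide_eq_false_iff_not, not_le]
          rw [h0, ← List.length_eq_countP_add_countP (pLe x)]
        rw [hccat, hg, key, hmaj, ← ih']
        omega
      · have hmaj : lmaj ((x :: y :: r2).reverse) = lmaj ((y :: r2).reverse) := by
          rw [show (x :: y :: r2).reverse = (y :: r2).reverse ++ [x] from List.reverse_cons,
            lmaj_concat _ hrevne x, hlastrev, if_neg hxy, add_zero]
        have hg : gamma x v = cycAux (pGt x) [] v := by
          unfold gamma
          rw [dif_neg hvne, if_neg (by rwa [hlastv])]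
        have key : linv (cycAux (pGt x) [] v) + v.countP (pGt x) = linv v := by
          have := linv_cycAux_pGt x v [] (by simp) (by simp [hvne]) ?_
          · simpa using this
          · intro hv'
            rw [hlastv]
            simp only [pGt, decide_eq_false_iff_not, not_lt]
            omega
        rw [hccat, hg, hmaj, ← ih']
        omega

theorem gamma_inj (x : ℤ) {v v' : List ℤ} (h : gamma x v = gamma x v') : v = v' := by
  rcases eq_or_ne v [] with rfl | hv
  · have : gamma x v' = [] := by rw [← h]; simp [gamma]
    have := (gamma_perm x v').length_eq
    rw [‹gamma x v' = []›] at this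
    exact (List.length_eq_zero_iff.mp this.symm).symm
  rcases eq_or_ne v' [] with rfl | hv'
  · have : gamma x v = [] := by rw [h]; simp [gamma]
    have h2 := (gamma_perm x v).length_eq
    rw [this] at h2
    exact List.length_eq_zero_iff.mp h2.symm
  by_cases h1 : x < v.getLast hv <;> by_cases h2 : x < v'.getLast hv'
  · have e1 : gamma x v = cycAux (pLe x) [] v := by unfold gamma; rw [dif_neg hv, if_pos h1]
    have e2 : gamma x v' = cycAux (pLe x) [] v' := by unfold gamma; rw [dif_neg hv', if_pos h2]
    have u1 := uncyc_cycAux (pLe x) v [] (by simp) (by simp [hv])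
      (fun _ => by simp only [pLe]; simp; omega)
    have u2 := uncyc_cycAux (pLe x) v' [] (by simp) (by simp [hv'])
      (fun _ => by simp only [pLe]; simp; omega)
    simp only [List.nil_append] at u1 u2
    rw [← u1, ← u2, ← e1, ← e2, h]
  · -- v in pLe case, v' in pGt case: contradiction via heads
    exfalso
    have e1 : gamma x v = cycAux (pLe x) [] v := by unfold gamma; rw [dif_neg hv, if_pos h1]
    have e2 : gamma x v' = cycAux (pGt x) [] v' := by unfold gamma; rw [dif_neg hv', if_neg h2]
    obtain ⟨a, t, hat, ha⟩ := cycAux_head (pLe x) v [] hv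
      (by simp only [pLe]; simp; omega)
    obtain ⟨a', t', hat', ha'⟩ := cycAux_head (pGt x) v' [] hv'
      (by simp only [pGt]; simp; omega)
    rw [e1, hat] at h
    rw [e2, hat'] at h
    have : a = a' := by injection h
    simp only [pLe, pGt, decide_eq_false_iff_not] at ha ha'
    omega
  · exfalso
    have e1 : gamma x v = cycAux (pGt x) [] v := by unfold gamma; rw [dif_neg hv, if_neg h1]
    have e2 : gamma x v' = cycAux (pLe x) [] v' := by unfold gamma; rw [dif_neg hv', if_pos h2]
    obtain ⟨a, t, hat, ha⟩ := cycAux_head (pGt x) v [] hv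
      (by simp only [pGt]; simp; omega)
    obtain ⟨a', t', hat', ha'⟩ := cycAux_head (pLe x) v' [] hv'
      (by simp only [pLe]; simp; omega)
    rw [e1, hat] at h
    rw [e2, hat'] at h
    have : a = a' := by injection h
    simp only [pLe, pGt, decide_eq_false_iff_not] at ha ha'
    omega
  · have e1 : gamma x v = cycAux (pGt x) [] v := by unfold gamma; rw [dif_neg hv, if_neg h1]
    have e2 : gamma x v' = cycAux (pGt x) [] v' := by unfold gamma; rw [dif_neg hv', if_neg h2]
    have u1 := uncyc_cycAux (pGt x) v [] (by simp) (by simp [hv])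
      (fun _ => by simp only [pGt]; simp; omega)
    have u2 := uncyc_cycAux (pGt x) v' [] (by simp) (by simp [hv'])
      (fun _ => by simp only [pGt]; simp; omega)
    simp only [List.nil_append] at u1 u2
    rw [← u1, ← u2, ← e1, ← e2, h]

theorem phiR_inj : ∀ {r r' : List ℤ}, phiR r = phiR r' → r = r' := by
  intro r
  induction r with
  | nil =>
    intro r' h
    cases r' with
    | nil => rfl
    | cons x t =>
      exfalso
      have : phiR (x :: t) = gamma x (phiR t) ++ [x] := rfl
      rw [this] at h
      exact (List.append_ne_nil_of_right_ne_nil _ (by simp) h.symm)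
  | cons x r ih =>
    intro r' h
    cases r' with
    | nil =>
      exfalso
      have : phiR (x :: r) = gamma x (phiR r) ++ [x] := rfl
      rw [this] at h
      exact (List.append_ne_nil_of_right_ne_nil _ (by simp) h)
    | cons x' t =>
      have h' : gamma x (phiR r) ++ [x] = gamma x' (phiR t) ++ [x'] := h
      obtain ⟨h1, h2⟩ := List.append_inj' h' (by simp)
      have hx : x = x' := by injection h2
      subst hx
      rw [ih (gamma_inj x h1)]

/-- Foata's bijection on words. -/
def foata (w : List ℤ) : List ℤ := phiR w.reverse

theorem foata_perm (w : List ℤ) : (foata w).Perm w :=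
  (phiR_perm w.reverse).trans (List.reverse_perm w)

theorem linv_foata (w : List ℤ) : linv (foata w) = lmaj w := by
  rw [foata, linv_phiR, List.reverse_reverse]

theorem foata_inj : Function.Injective foata := by
  intro w w' h
  have := phiR_inj h
  exact List.reverse_injective this

end FoataAux
namespace FoataAux

theorem wInv_congr {N : ℕ} {w w' : ℕ → ℤ} (h : ∀ i < N, w i = w' i) : wInv N w = wInv N w' := by
  unfold wInv
  congr 1
  apply Finset.filter_congr
  rintro ⟨i, j⟩ hp
  simp only [Finset.mem_product, Finset.mem_range] at hp
  rw [h i hp.1, h j hp.2]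

theorem wDes_congr {N : ℕ} {w w' : ℕ → ℤ} (h : ∀ i < N, w i = w' i) : wDes N w = wDes N w' := by
  unfold wDes
  apply Finset.filter_congr
  intro i hi
  simp only [Finset.mem_Ico] at hi
  rw [h i hi.2, h (i-1) (by omega)]

theorem wMaj_congr {N : ℕ} {w w' : ℕ → ℤ} (h : ∀ i < N, w i = w' i) : wMaj N w = wMaj N w' := by
  unfold wMaj
  rw [wDes_congr h]

theorem wInv_eq_sum (N : ℕ) (w : ℕ → ℤ) :
    wInv N w = ∑ j ∈ Finset.range N, ((Finset.range j).filter fun i => w j < w i).card := by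
  unfold wInv
  rw [Finset.card_filter, Finset.sum_product_right]
  refine Finset.sum_congr rfl fun j hj => ?_
  rw [Finset.card_filter]
  rw [← Finset.sum_subset (Finset.range_subset_range.mpr (Finset.mem_range.mp hj).le)
    (fun i _ hi => by
      simp only [Finset.mem_range, not_lt] at hi
      simp only [ite_eq_right_iff, and_imp]
      intro h1
      omega)]
  refine Finset.sum_congr rfl fun i hi => ?_
  simp only [Finset.mem_range] at hi
  simp [hi]

theorem card_filter_range_getD (l : List ℤ) (P : ℤ → Prop) [DecidablePred P] :
    ((Finset.range l.length).filter fun i => P (l.getD i 0)).card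
      = l.countP (fun b => decide (P b)) := by
  induction l using List.reverseRecOn with
  | nil => simp
  | append_singleton l x ih =>
    rw [List.length_append, List.length_singleton, Finset.range_add_one, Finset.filter_insert]
    have hagree : ∀ i < l.length, (l ++ [x]).getD i 0 = l.getD i 0 := fun i hi =>
      List.getD_append _ _ _ _ hi
    have hx : (l ++ [x]).getD l.length 0 = x := by
      rw [List.getD_append_right _ _ _ _ le_rfl, Nat.sub_self]
      rfl
    have hfeq : (Finset.range l.length).filter (fun i => P ((l ++ [x]).getD i 0))
        = (Finset.range l.length).filter (fun i => P (l.getD i 0)) := by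
      apply Finset.filter_congr
      intro i hi
      rw [hagree i (Finset.mem_range.mp hi)]
    rw [List.countP_append]
    by_cases hP : P ((l ++ [x]).getD l.length 0)
    · rw [if_pos hP, Finset.card_insert_of_notMem (by simp), hfeq, ih]
      have : P x := by rwa [hx] at hP
      simp [List.countP_cons, this]
    · rw [if_neg hP, hfeq, ih]
      have : ¬ P x := by rwa [hx] at hP
      simp [List.countP_cons, this]

theorem wInv_getD (l : List ℤ) : wInv l.length (fun i => l.getD i 0) = linv l := by
  induction l using List.reverseRecOn with
  | nil => simp [wInv_eq_sum, linv]
  | append_singleton l x ih =>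
    rw [wInv_eq_sum, List.length_append, List.length_singleton, Finset.sum_range_succ,
      ← wInv_eq_sum]
    have hagree : ∀ i < l.length, (l ++ [x]).getD i 0 = l.getD i 0 := fun i hi =>
      List.getD_append _ _ _ _ hi
    have hx : (l ++ [x]).getD l.length 0 = x := by
      rw [List.getD_append_right _ _ _ _ le_rfl, Nat.sub_self]
      rfl
    have h1 : wInv l.length (fun i => (l ++ [x]).getD i 0) = linv l := by
      rw [wInv_congr (fun i hi => hagree i hi), ih]
    rw [h1, linv_concat]
    congr 1
    have : ((Finset.range l.length).filter
        fun i => (l ++ [x]).getD l.length 0 < (l ++ [x]).getD i 0).card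
        = ((Finset.range l.length).filter fun i => x < l.getD i 0).card := by
      congr 1
      apply Finset.filter_congr
      intro i hi
      rw [hagree i (Finset.mem_range.mp hi), hx]
    rw [this, card_filter_range_getD l (fun b => x < b)]

theorem wMaj_getD (l : List ℤ) : wMaj l.length (fun i => l.getD i 0) = lmaj l := by
  induction l using List.reverseRecOn with
  | nil => simp [wMaj, wDes, lmaj, lmajA]
  | append_singleton l x ih =>
    have hagree : ∀ i < l.length, (l ++ [x]).getD i 0 = l.getD i 0 := fun i hi =>
      List.getD_append _ _ _ _ hi
    have hx : (l ++ [x]).getD l.length 0 = x := by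
      rw [List.getD_append_right _ _ _ _ le_rfl, Nat.sub_self]
      rfl
    have hsum : ∀ (M : ℕ) (w : ℕ → ℤ),
        wMaj M w = ∑ i ∈ Finset.Ico 1 M, if w i < w (i-1) then i else 0 := by
      intro M w
      rw [wMaj, wDes, Finset.sum_filter]
    rcases eq_or_ne l [] with rfl | hl
    · simp only [List.nil_append]
      rw [hsum]
      show (∑ i ∈ Finset.Ico 1 1, _) = lmaj [x]
      simp [lmaj, lmajA]
    · have hN : 1 ≤ l.length := by
        have := List.length_pos_iff.mpr hl
        omega
      rw [hsum, List.length_append, List.length_singleton,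
        Finset.sum_Ico_succ_top hN]
      have h2 : ∑ i ∈ Finset.Ico 1 l.length,
          (if (l ++ [x]).getD i 0 < (l ++ [x]).getD (i-1) 0 then i else 0)
          = lmaj l := by
        rw [← ih, hsum]
        refine Finset.sum_congr rfl fun i hi => ?_
        simp only [Finset.mem_Ico] at hi
        rw [hagree i hi.2, hagree (i-1) (by omega)]
      have h3 : (l ++ [x]).getD l.length 0 = x := hx
      have h4 : (l ++ [x]).getD (l.length - 1) 0 = l.getLast hl := by
        rw [hagree (l.length - 1) (by omega), List.getD_eq_getElem l 0 (by omega),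
          List.getLast_eq_getElem]
      rw [h2, h3, h4, lmaj_concat l hl x]

theorem wInv_ofFn {n : ℕ} (f : Fin n → ℤ) :
    wInv n (fun i => if h : i < n then f ⟨i, h⟩ else 0) = linv (List.ofFn f) := by
  rw [← wInv_getD (List.ofFn f), List.length_ofFn]
  apply wInv_congr
  intro i hi
  rw [dif_pos hi, List.getD_eq_getElem _ _ (by simpa using hi), List.getElem_ofFn]

theorem wMaj_ofFn {n : ℕ} (f : Fin n → ℤ) :
    wMaj n (fun i => if h : i < n then f ⟨i, h⟩ else 0) = lmaj (List.ofFn f) := by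
  rw [← wMaj_getD (List.ofFn f), List.length_ofFn]
  apply wMaj_congr
  intro i hi
  rw [dif_pos hi, List.getD_eq_getElem _ _ (by simpa using hi), List.getElem_ofFn]

end FoataAux
namespace FoataAux

/-- block index of a value `v ∈ [1, n]` determined by the descent-position set `S` -/
def blk (S : Finset ℕ) (v : ℕ) : ℕ := (S.filter (· < v)).card

theorem blk_mono (S : Finset ℕ) : Monotone (blk S) := by
  intro u v huv
  apply Finset.card_le_card
  intro s hs
  simp only [Finset.mem_filter] at hs ⊢
  exact ⟨hs.1, by omega⟩

theorem blk_succ_of_not_mem {S : Finset ℕ} {v : ℕ} (h : v ∉ S) : blk S (v + 1) = blk S v := by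
  unfold blk
  congr 1
  apply Finset.filter_congr
  intro s hs
  have hne : s ≠ v := fun hc => h (hc ▸ hs)
  constructor <;> intro <;> simp_all <;> omega

theorem blk_lt_of_mem {S : Finset ℕ} {v : ℕ} (h : v ∈ S) : blk S v < blk S (v + 1) := by
  apply Finset.card_lt_card
  constructor
  · intro s hs
    simp only [Finset.mem_filter] at hs ⊢
    exact ⟨hs.1, by omega⟩
  · intro hsub
    have h1 : v ∈ S.filter (· < v + 1) := Finset.mem_filter.mpr ⟨h, by omega⟩
    have h2 := hsub h1
    simp only [Finset.mem_filter] at h2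
    omega

/-- the weakly increasing word whose letters are the block indices -/
def L0 (n : ℕ) (S : Finset ℕ) : Fin n → ℤ := fun j => (blk S (j.val + 1) : ℤ)

theorem L0_mono {n : ℕ} {S : Finset ℕ} : Monotone (L0 n S) := by
  intro i j hij
  have : i.val ≤ j.val := hij
  exact Int.ofNat_le.mpr (blk_mono S (by omega))

theorem pos_lt_succ {n : ℕ} {S : Finset ℕ} {π : Equiv.Perm (Fin n)} (hS : sDes n π⁻¹ ⊆ S)
    (u v : Fin n) (hv : v.val = u.val + 1) (hL : L0 n S u = L0 n S v) : π⁻¹ u < π⁻¹ v := by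
  have hvn : u.val + 1 < n := by rw [← hv]; exact v.isLt
  have hnotS : u.val + 1 ∉ S := by
    intro hmem
    have h1 : blk S (u.val + 1) < blk S (u.val + 2) := blk_lt_of_mem hmem
    have h2 : (blk S (u.val + 1) : ℤ) = (blk S (u.val + 1 + 1) : ℤ) := by
      have := hL
      simp only [L0, hv] at this
      exact_mod_cast this
    have e : u.val + 1 + 1 = u.val + 2 := by omega
    rw [e] at h2
    omega
  have hnotDes : u.val + 1 ∉ sDes n π⁻¹ := fun hmem => hnotS (hS hmem)
  simp only [sDes, wDes, Finset.mem_filter, Finset.mem_Ico, not_and] at hnotDes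
  have hcond := hnotDes ⟨by omega, hvn⟩
  simp only [sword] at hcond
  rw [dif_pos hvn, dif_pos (show u.val + 1 - 1 < n by omega)] at hcond
  have e1 : (⟨u.val + 1, hvn⟩ : Fin n) = v := Fin.ext (show u.val + 1 = v.val by omega)
  have e2 : (⟨u.val + 1 - 1, by omega⟩ : Fin n) = u :=
    Fin.ext (show u.val + 1 - 1 = u.val by omega)
  rw [e1, e2] at hcond
  have hne : (π⁻¹ u).val ≠ (π⁻¹ v).val := by
    intro hc
    have : π⁻¹ u = π⁻¹ v := Fin.ext hc
    have : u = v := π⁻¹.injective this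
    have : u.val = v.val := congrArg Fin.val this
    omega
  have : ¬ ((π⁻¹ v).val : ℤ) + 1 < ((π⁻¹ u).val : ℤ) + 1 := hcond
  show (π⁻¹ u).val < (π⁻¹ v).val
  omega

theorem pos_mono_aux {n : ℕ} {S : Finset ℕ} {π : Equiv.Perm (Fin n)} (hS : sDes n π⁻¹ ⊆ S) :
    ∀ (k : ℕ) (u v : Fin n), v.val = u.val + k + 1 → L0 n S u = L0 n S v → π⁻¹ u < π⁻¹ v := by
  intro k
  induction k with
  | zero => exact fun u v h1 h2 => pos_lt_succ hS u v (by omega) h2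
  | succ k ih =>
    intro u v h1 h2
    have hmidlt : u.val + 1 < n := by have := v.isLt; omega
    set m : Fin n := ⟨u.val + 1, hmidlt⟩ with hm
    have hL1 : L0 n S u ≤ L0 n S m := L0_mono (show u.val ≤ u.val + 1 by omega)
    have hL2 : L0 n S m ≤ L0 n S v := L0_mono (show u.val + 1 ≤ v.val by omega)
    have hLum : L0 n S u = L0 n S m := le_antisymm hL1 (h2 ▸ hL2)
    have hLmv : L0 n S m = L0 n S v := by rw [← hLum, h2]
    exact lt_trans (pos_lt_succ hS u m rfl hLum)
      (ih m v (show v.val = u.val + 1 + k + 1 by omega) hLmv)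

theorem pos_mono {n : ℕ} {S : Finset ℕ} {π : Equiv.Perm (Fin n)} (hS : sDes n π⁻¹ ⊆ S)
    {u v : Fin n} (huv : u < v) (hL : L0 n S u = L0 n S v) : π⁻¹ u < π⁻¹ v := by
  have h : v.val = u.val + (v.val - u.val - 1) + 1 := by
    have : u.val < v.val := huv
    omega
  exact pos_mono_aux hS _ u v h hL

theorem cmp_iff {n : ℕ} {S : Finset ℕ} {π : Equiv.Perm (Fin n)} (hS : sDes n π⁻¹ ⊆ S)
    {i j : Fin n} (hij : i < j) : π j < π i ↔ L0 n S (π j) < L0 n S (π i) := by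
  constructor
  · intro h
    rcases lt_or_eq_of_le (L0_mono h.le) with h2 | h2
    · exact h2
    · exfalso
      have := pos_mono hS h h2
      simp only [Equiv.Perm.coe_inv, Equiv.symm_apply_apply] at this
      exact absurd hij (not_lt.mpr this.le)
  · intro h
    by_contra h2
    exact absurd (L0_mono (not_lt.mp h2)) (not_le.mpr h)

/-- the word of block indices read along a permutation, as a function -/
def bwF (n : ℕ) (S : Finset ℕ) (π : Equiv.Perm (Fin n)) : ℕ → ℤ :=
  fun i => if h : i < n then L0 n S (π ⟨i, h⟩) else 0

theorem sword_lt_iff {n : ℕ} {S : Finset ℕ} {π : Equiv.Perm (Fin n)} (hS : sDes n π⁻¹ ⊆ S)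
    {i j : ℕ} (hi : i < n) (hj : j < n) (hij : i < j) :
    (sword n π j < sword n π i ↔ bwF n S π j < bwF n S π i) := by
  rw [sword, sword, bwF, bwF, dif_pos hi, dif_pos hj, dif_pos hi, dif_pos hj]
  have hfin : (⟨i, hi⟩ : Fin n) < ⟨j, hj⟩ := hij
  rw [← cmp_iff hS hfin]
  constructor
  · intro h
    have : (π ⟨j, hj⟩ : ℕ) < (π ⟨i, hi⟩ : ℕ) := by omega
    exact this
  · intro h
    have : (π ⟨j, hj⟩ : ℕ) < (π ⟨i, hi⟩ : ℕ) := h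
    omega

theorem wInv_blocked {n : ℕ} {S : Finset ℕ} {π : Equiv.Perm (Fin n)} (hS : sDes n π⁻¹ ⊆ S) :
    wInv n (sword n π) = wInv n (bwF n S π) := by
  unfold wInv
  congr 1
  apply Finset.filter_congr
  rintro ⟨i, j⟩ hp
  simp only [Finset.mem_product, Finset.mem_range] at hp
  constructor
  · rintro ⟨h1, h2⟩
    exact ⟨h1, (sword_lt_iff hS hp.1 hp.2 h1).mp h2⟩
  · rintro ⟨h1, h2⟩
    exact ⟨h1, (sword_lt_iff hS hp.1 hp.2 h1).mpr h2⟩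

theorem wDes_blocked {n : ℕ} {S : Finset ℕ} {π : Equiv.Perm (Fin n)} (hS : sDes n π⁻¹ ⊆ S) :
    wDes n (sword n π) = wDes n (bwF n S π) := by
  unfold wDes
  apply Finset.filter_congr
  intro i hi
  simp only [Finset.mem_Ico] at hi
  exact sword_lt_iff hS (by omega) hi.2 (by omega)

/-- the word of block indices read along a permutation, as a list -/
def LwL (n : ℕ) (S : Finset ℕ) (π : Equiv.Perm (Fin n)) : List ℤ :=
  List.ofFn fun j : Fin n => L0 n S (π j)

theorem sInv_eq_linv {n : ℕ} {S : Finset ℕ} {π : Equiv.Perm (Fin n)} (hS : sDes n π⁻¹ ⊆ S) :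
    sInv n π = linv (LwL n S π) := by
  rw [sInv, wInv_blocked hS, LwL, ← wInv_ofFn]
  rfl

theorem sMaj_eq_lmaj {n : ℕ} {S : Finset ℕ} {π : Equiv.Perm (Fin n)} (hS : sDes n π⁻¹ ⊆ S) :
    sMaj n π = lmaj (LwL n S π) := by
  rw [sMaj, wMaj, wDes_blocked hS, LwL, ← wMaj_ofFn]
  rfl

theorem eq_sort_of_class {n : ℕ} {S : Finset ℕ} {π : Equiv.Perm (Fin n)}
    (hS : sDes n π⁻¹ ⊆ S) : π⁻¹ = Tuple.sort (fun j => L0 n S (π j)) := by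
  rw [Tuple.eq_sort_iff]
  constructor
  · intro a b hab
    show L0 n S (π (π⁻¹ a)) ≤ L0 n S (π (π⁻¹ b))
    simp only [Equiv.Perm.coe_inv, Equiv.apply_symm_apply]
    exact L0_mono hab
  · intro i j hij heq
    simp only [Function.comp_apply, Equiv.Perm.coe_inv, Equiv.apply_symm_apply] at heq
    exact pos_mono hS hij heq

theorem LwL_inj {n : ℕ} {S : Finset ℕ} {π π' : Equiv.Perm (Fin n)}
    (hS : sDes n π⁻¹ ⊆ S) (hS' : sDes n π'⁻¹ ⊆ S) (h : LwL n S π = LwL n S π') : π = π' := by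
  have hfun : (fun j => L0 n S (π j)) = fun j => L0 n S (π' j) := List.ofFn_injective h
  have h1 := eq_sort_of_class hS
  have h2 := eq_sort_of_class hS'
  rw [hfun] at h1
  have : π⁻¹ = π'⁻¹ := h1.trans h2.symm
  exact inv_injective this

theorem exists_class_word {n : ℕ} {S : Finset ℕ} (l : List ℤ)
    (hl : l.Perm (List.ofFn (L0 n S))) :
    ∃ π : Equiv.Perm (Fin n), sDes n π⁻¹ ⊆ S ∧ LwL n S π = l := by
  have hlen : l.length = n := by rw [hl.length_eq, List.length_ofFn]
  set g : Fin n → ℤ := fun i => l.get (Fin.cast hlen.symm i) with hg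
  have hofg : List.ofFn g = l := by
    apply List.ext_getElem
    · rw [List.length_ofFn, hlen]
    · intro i h1 h2
      simp [hg]
  set τ := Tuple.sort g with hτ
  have hmono : Monotone (g ∘ τ) := Tuple.monotone_sort g
  have hperm : (List.ofFn (g ∘ τ)).Perm (List.ofFn (L0 n S)) := by
    refine (τ.ofFn_comp_perm g).trans ?_
    rw [hofg]
    exact hl
  have hL0mono : Monotone (L0 n S) := L0_mono
  have heq : List.ofFn (g ∘ τ) = List.ofFn (L0 n S) :=
    List.Perm.eq_of_sortedLE hmono.sortedLE_ofFn hL0mono.sortedLE_ofFn hperm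
  have hfun : g ∘ τ = L0 n S := List.ofFn_injective heq
  have hsort := (Tuple.eq_sort_iff (f := g) (σ := τ)).mp rfl
  refine ⟨τ⁻¹, ?_, ?_⟩
  · intro i hi
    rw [inv_inv] at hi
    simp only [sDes, wDes, Finset.mem_filter, Finset.mem_Ico] at hi
    obtain ⟨⟨hi1, hi2⟩, hlt⟩ := hi
    simp only [sword] at hlt
    rw [dif_pos hi2, dif_pos (show i - 1 < n by omega)] at hlt
    set i' : Fin n := ⟨i, hi2⟩ with hi'
    set j' : Fin n := ⟨i - 1, by omega⟩ with hj'
    have hji : j' < i' := by show i - 1 < i; omega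
    have hτlt : τ i' < τ j' := by
      have : (τ i' : ℕ) < (τ j' : ℕ) := by omega
      exact this
    have hne : g (τ j') ≠ g (τ i') := by
      intro he
      exact absurd (hsort.2 j' i' hji he) (not_lt.mpr hτlt.le)
    have hglt : g (τ j') < g (τ i') := lt_of_le_of_ne (hsort.1 hji.le) hne
    have hgj : g (τ j') = L0 n S j' := congrFun hfun j'
    have hgi : g (τ i') = L0 n S i' := congrFun hfun i'
    rw [hgj, hgi] at hglt
    simp only [L0, hi', hj'] at hglt
    have hblk : blk S (i - 1 + 1) < blk S (i + 1) := by exact_mod_cast hglt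
    by_contra hmem
    have e1 : blk S (i + 1) = blk S i := blk_succ_of_not_mem hmem
    have e2 : i - 1 + 1 = i := by omega
    rw [e2] at hblk
    omega
  · rw [LwL, ← hofg]
    congr 1
    funext j
    have h1 : L0 n S (τ⁻¹ j) = g (τ (τ⁻¹ j)) := (congrFun hfun (τ⁻¹ j)).symm
    rw [h1, Equiv.Perm.coe_inv, Equiv.apply_symm_apply]

end FoataAux
namespace FoataAux

def classF (n : ℕ) (S : Finset ℕ) : Finset (Equiv.Perm (Fin n)) :=
  Finset.univ.filter fun π => sDes n π⁻¹ ⊆ S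

theorem B_eq {F : Type*} [CommRing F] (q : F) (n : ℕ) (S : Finset ℕ) :
    ∑ π ∈ classF n S, q ^ sInv n π = ∑ π ∈ classF n S, q ^ sMaj n π := by
  have hmem : ∀ π ∈ classF n S, sDes n π⁻¹ ⊆ S := by
    intro π hπ
    simpa [classF] using hπ
  have hinj : ∀ x ∈ classF n S, ∀ y ∈ classF n S, LwL n S x = LwL n S y → x = y :=
    fun x hx y hy h => LwL_inj (hmem x hx) (hmem y hy) h
  have h1 : ∑ π ∈ classF n S, q ^ sInv n π
      = ∑ w ∈ (classF n S).image (LwL n S), q ^ linv w := by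
    rw [Finset.sum_image hinj]
    exact Finset.sum_congr rfl fun π hπ => by rw [sInv_eq_linv (hmem π hπ)]
  have h2 : ∑ π ∈ classF n S, q ^ sMaj n π
      = ∑ w ∈ (classF n S).image (LwL n S), q ^ lmaj w := by
    rw [Finset.sum_image hinj]
    exact Finset.sum_congr rfl fun π hπ => by rw [sMaj_eq_lmaj (hmem π hπ)]
  set W := (classF n S).image (LwL n S) with hW
  have hWperm : ∀ w ∈ W, w.Perm (List.ofFn (L0 n S)) := by
    intro w hw
    obtain ⟨π, hπ, rfl⟩ := Finset.mem_image.mp hw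
    exact π.ofFn_comp_perm (L0 n S)
  have hWimage : W.image foata = W := by
    apply Finset.eq_of_subset_of_card_le
    · intro w hw
      obtain ⟨w', hw', rfl⟩ := Finset.mem_image.mp hw
      have hperm : (foata w').Perm (List.ofFn (L0 n S)) := (foata_perm w').trans (hWperm w' hw')
      obtain ⟨π, hπS, hπw⟩ := exists_class_word _ hperm
      rw [← hπw, hW]
      exact Finset.mem_image_of_mem _ (Finset.mem_filter.mpr ⟨Finset.mem_univ _, hπS⟩)
    · rw [Finset.card_image_of_injective _ foata_inj]
  have h3 : ∑ w ∈ W, q ^ lmaj w = ∑ w ∈ W, q ^ linv w := by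
    calc ∑ w ∈ W, q ^ lmaj w = ∑ w ∈ W, q ^ linv (foata w) :=
        Finset.sum_congr rfl fun w _ => by rw [linv_foata]
      _ = ∑ w ∈ W.image foata, q ^ linv w := by
        rw [Finset.sum_image fun x _ y _ h => foata_inj h]
      _ = ∑ w ∈ W, q ^ linv w := by rw [hWimage]
  rw [h1, h2, h3]

theorem A_eq {F : Type*} [CommRing F] (q : F) (n : ℕ) (S : Finset ℕ) :
    ∑ π ∈ Finset.univ.filter (fun π : Equiv.Perm (Fin n) => sDes n π⁻¹ = S), q ^ sInv n π
    = ∑ π ∈ Finset.univ.filter (fun π : Equiv.Perm (Fin n) => sDes n π⁻¹ = S),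
        q ^ sMaj n π := by
  induction S using Finset.strongInduction with
  | _ S ih =>
  have hpart : ∀ f : Equiv.Perm (Fin n) → F,
      ∑ π ∈ classF n S, f π
        = ∑ S' ∈ S.powerset,
            ∑ π ∈ Finset.univ.filter (fun π : Equiv.Perm (Fin n) => sDes n π⁻¹ = S'), f π := by
    intro f
    have hmaps : ∀ π ∈ classF n S, sDes n π⁻¹ ∈ S.powerset := by
      intro π hπ
      exact Finset.mem_powerset.mpr (by simpa [classF] using hπ)
    rw [← Finset.sum_fiberwise_of_maps_to hmaps f]
    refine Finset.sum_congr rfl fun S' hS' => ?_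
    congr 1
    ext π
    simp only [classF, Finset.mem_filter, Finset.mem_univ, true_and]
    constructor
    · rintro ⟨_, h2⟩
      exact h2
    · rintro h2
      exact ⟨h2 ▸ Finset.mem_powerset.mp hS', h2⟩
  have hSin : S ∈ S.powerset := Finset.mem_powerset.mpr (Finset.Subset.refl S)
  have hins : S.powerset = insert S (S.powerset.erase S) := (Finset.insert_erase hSin).symm
  have hsplitInv := hpart (fun π => q ^ sInv n π)
  have hsplitMaj := hpart (fun π => q ^ sMaj n π)
  rw [hins, Finset.sum_insert (Finset.notMem_erase S _)] at hsplitInv hsplitMaj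
  have hE : ∑ S' ∈ S.powerset.erase S,
        (∑ π ∈ Finset.univ.filter (fun π : Equiv.Perm (Fin n) => sDes n π⁻¹ = S'),
          q ^ sInv n π)
      = ∑ S' ∈ S.powerset.erase S,
        (∑ π ∈ Finset.univ.filter (fun π : Equiv.Perm (Fin n) => sDes n π⁻¹ = S'),
          q ^ sMaj n π) := by
    refine Finset.sum_congr rfl fun S' hS' => ?_
    have hss : S' ⊂ S :=
      (Finset.mem_powerset.mp (Finset.mem_of_mem_erase hS')).ssubset_of_ne
        (Finset.ne_of_mem_erase hS')
    exact ih S' hss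
  have h5 := (hsplitInv.symm.trans ((B_eq q n S).trans hsplitMaj))
  rw [hE] at h5
  exact add_right_cancel h5

theorem main_identity {F : Type*} [CommRing F] (q t : F) (n : ℕ) :
    (∑ π : Equiv.Perm (Fin n), q ^ sInv n π * t ^ sMaj n π⁻¹)
      = ∑ π : Equiv.Perm (Fin n), q ^ sMaj n π * t ^ sMaj n π⁻¹ := by
  have hmaps : ∀ π : Equiv.Perm (Fin n), π ∈ Finset.univ →
      sDes n π⁻¹ ∈ (Finset.Ico 1 n).powerset := fun π _ =>
    Finset.mem_powerset.mpr (Finset.filter_subset _ _)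
  rw [← Finset.sum_fiberwise_of_maps_to hmaps (fun π => q ^ sInv n π * t ^ sMaj n π⁻¹),
    ← Finset.sum_fiberwise_of_maps_to hmaps (fun π => q ^ sMaj n π * t ^ sMaj n π⁻¹)]
  refine Finset.sum_congr rfl fun S _ => ?_
  have hfiber : ∀ π ∈ Finset.univ.filter (fun π : Equiv.Perm (Fin n) => sDes n π⁻¹ = S),
      sMaj n π⁻¹ = ∑ i ∈ S, i := by
    intro π hπ
    have h := (Finset.mem_filter.mp hπ).2
    calc sMaj n π⁻¹ = ∑ i ∈ sDes n π⁻¹, i := rfl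
      _ = ∑ i ∈ S, i := by rw [h]
  calc ∑ π ∈ Finset.univ.filter (fun π : Equiv.Perm (Fin n) => sDes n π⁻¹ = S),
        q ^ sInv n π * t ^ sMaj n π⁻¹
      = ∑ π ∈ Finset.univ.filter (fun π : Equiv.Perm (Fin n) => sDes n π⁻¹ = S),
        q ^ sInv n π * t ^ (∑ i ∈ S, i) :=
        Finset.sum_congr rfl fun π hπ => by rw [hfiber π hπ]
    _ = (∑ π ∈ Finset.univ.filter (fun π : Equiv.Perm (Fin n) => sDes n π⁻¹ = S),
        q ^ sInv n π) * t ^ (∑ i ∈ S, i) := by rw [← Finset.sum_mul]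
    _ = (∑ π ∈ Finset.univ.filter (fun π : Equiv.Perm (Fin n) => sDes n π⁻¹ = S),
        q ^ sMaj n π) * t ^ (∑ i ∈ S, i) := by rw [A_eq]
    _ = ∑ π ∈ Finset.univ.filter (fun π : Equiv.Perm (Fin n) => sDes n π⁻¹ = S),
        q ^ sMaj n π * t ^ (∑ i ∈ S, i) := by rw [Finset.sum_mul]
    _ = ∑ π ∈ Finset.univ.filter (fun π : Equiv.Perm (Fin n) => sDes n π⁻¹ = S),
        q ^ sMaj n π * t ^ sMaj n π⁻¹ :=
        Finset.sum_congr rfl fun π hπ => by rw [hfiber π hπ]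

end FoataAux
theorem stmt3 (n : ℕ) (hn : 0 < n) :
    (∑ π : Equiv.Perm (Fin n),
        (RatFunc.C 𝕢 : RatFunc (RatFunc ℚ)) ^ sInv n π * RatFunc.X ^ sMaj n π⁻¹) =
      (∑ π : Equiv.Perm (Fin n),
        (RatFunc.C 𝕢 : RatFunc (RatFunc ℚ)) ^ sMaj n π * RatFunc.X ^ sMaj n π⁻¹) := by
  exact FoataAux.main_identity _ _ n

end Statements
end

section
/- For any subset M = {m_1 < ... < m_t} ⊆ [n-1], the generating function ∑ q^{maj(π)} over all π ∈ S_n with Des(π⁻¹) ⊆ M equals the q-multinomial coefficient [n choose m_1-m_0, m_2-m_1, ..., m_{t+1}-m_t]_q, where m_0 = 0 and m_{t+1} = n. -/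
open Finset

noncomputable section Statements

open Finset RatFunc

local notation "𝕢" => (RatFunc.X : RatFunc ℚ)

set_option linter.dupNamespace false

namespace GG
open Finset
local notation "X" => (RatFunc.X : RatFunc ℚ)
variable {F : Type} [Field F]


lemma qInt_add (q : F) (a b : ℕ) : qInt q (a + b) = qInt q a + q ^ a * qInt q b := by
  unfold qInt
  rw [Finset.sum_range_add, Finset.mul_sum]
  simp [pow_add]

lemma qFact_succ (q : F) (N : ℕ) : qFact q (N + 1) = qFact q N * qInt q (N + 1) := by
  unfold qFact; rw [Finset.prod_range_succ]


lemma qInt_X_eq (m : ℕ) : qInt (X) m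
    = algebraMap (Polynomial ℚ) (RatFunc ℚ) (∑ i ∈ Finset.range m, Polynomial.X ^ i) := by
  rw [map_sum]
  unfold qInt
  simp [RatFunc.algebraMap_X]

lemma qInt_X_ne_zero {m : ℕ} (h : m ≠ 0) : qInt (X) m ≠ 0 := by
  rw [qInt_X_eq]
  apply RatFunc.algebraMap_ne_zero
  intro hc
  have := congrArg (Polynomial.eval 0) hc
  simp [Polynomial.eval_finset_sum] at this
  exact h this

lemma qFact_X_ne_zero (N : ℕ) : qFact (X) N ≠ 0 := by
  unfold qFact
  apply Finset.prod_ne_zero_iff.mpr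
  intro i _
  exact qInt_X_ne_zero (by omega)


open Finset

variable {L : ℕ}

def gtc (b : Fin L) (μ : Fin L → ℕ) : ℕ := ∑ c ∈ univ.filter (fun c => b < c), μ c

def Mq (μ : Fin L → ℕ) : RatFunc ℚ := qFact X (∑ c, μ c) / ∏ c, qFact X (μ c)

lemma qInt_zero (q : RatFunc ℚ) : qInt q 0 = 0 := by simp [qInt]

lemma tele (f : ℕ → RatFunc ℚ) {a b : ℕ} (h : a ≤ b) :
    ∑ j ∈ Finset.Ico a b, (f j - f (j + 1)) = f a - f b := by
  induction b, h using Nat.le_induction with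
  | base => simp
  | succ b hb ih => rw [Finset.sum_Ico_succ_top hb, ih]; ring

lemma L4 (μ : Fin L → ℕ) (b : Fin L) :
    ∑ c : Fin L, X ^ (gtc c μ + (∑ d, μ d) * (if b < c then 1 else 0)) * qInt X (μ c)
      = X ^ (gtc b μ) * qInt X (∑ d, μ d) := by
  set N := ∑ d, μ d with hN
  set T : ℕ → ℕ := fun j => ∑ c ∈ univ.filter (fun c : Fin L => j ≤ (c : ℕ)), μ c with hT
  have hT0 : T 0 = N := by simp [hT, hN]
  have hTL : T L = 0 := by
    simp only [hT]
    rw [Finset.filter_false_of_mem (by intro c _; have := c.2; omega), Finset.sum_empty]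
  have hTsucc : ∀ j, (h : j < L) → T j = μ ⟨j, h⟩ + T (j + 1) := by
    intro j h
    have hins : univ.filter (fun c : Fin L => j ≤ (c : ℕ))
        = insert ⟨j, h⟩ (univ.filter (fun c : Fin L => j + 1 ≤ (c : ℕ))) := by
      ext c
      simp only [Finset.mem_filter, Finset.mem_univ, true_and, Finset.mem_insert]
      constructor
      · intro hc
        rcases Nat.eq_or_lt_of_le hc with h1 | h1
        · left; exact (Fin.ext h1.symm)
        · right; omega
      · rintro (rfl | hc)
        · simp
        · omega
    simp only [hT]
    rw [hins, Finset.sum_insert (by simp)]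
  have hTmono : ∀ j, T (j + 1) ≤ T j := by
    intro j
    apply Finset.sum_le_sum_of_subset
    intro c
    simp only [Finset.mem_filter, Finset.mem_univ, true_and]
    omega
  have hgtc : ∀ c : Fin L, gtc c μ = T ((c : ℕ) + 1) := by
    intro c
    simp only [hT]
    unfold gtc
    apply Finset.sum_congr _ (fun _ _ => rfl)
    ext d
    simp only [Finset.mem_filter, Finset.mem_univ, true_and, Fin.lt_def]
    omega
  set G : ℕ → RatFunc ℚ := fun j => qInt X (T j) with hG
  have hGstep : ∀ j, j < L → X ^ (T (j + 1)) * qInt X (T j - T (j + 1)) = G j - G (j + 1) := by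
    intro j hj
    have e : T (j + 1) + (T j - T (j + 1)) = T j := by
      have := hTmono j; omega
    have h2 := qInt_add X (T (j + 1)) (T j - T (j + 1))
    rw [e] at h2
    simp only [hG]
    rw [h2]
    ring
  have key : ∀ c : Fin L,
      X ^ (gtc c μ + N * (if b < c then 1 else 0)) * qInt X (μ c)
        = X ^ (N * (if (b : ℕ) < (c : ℕ) then 1 else 0)) * (G (c : ℕ) - G ((c : ℕ) + 1)) := by
    intro c
    have hc : (c : ℕ) < L := c.2
    have hμ : μ c = T (c : ℕ) - T ((c : ℕ) + 1) := by
      have h3 := hTsucc (c : ℕ) hc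
      have e2 : (⟨(c : ℕ), hc⟩ : Fin L) = c := by ext; rfl
      rw [e2] at h3
      omega
    rw [hgtc, hμ]
    simp only [Fin.lt_def]
    rw [← hGstep (c : ℕ) hc]
    ring
  rw [Finset.sum_congr rfl (fun c _ => key c)]
  rw [Fin.sum_univ_eq_sum_range
    (fun j => X ^ (N * (if (b : ℕ) < j then 1 else 0)) * (G j - G (j + 1))) L]
  have hbL : (b : ℕ) + 1 ≤ L := b.2
  rw [Finset.range_eq_Ico, ← Finset.sum_Ico_consecutive _ (Nat.zero_le ((b : ℕ) + 1)) hbL]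
  have part1 : ∑ j ∈ Finset.Ico 0 ((b : ℕ) + 1),
      X ^ (N * (if (b : ℕ) < j then 1 else 0)) * (G j - G (j + 1)) = G 0 - G ((b : ℕ) + 1) := by
    rw [Finset.sum_congr rfl (fun j hj => by
      simp only [Finset.mem_Ico] at hj
      rw [if_neg (by omega), Nat.mul_zero, pow_zero, one_mul])]
    exact tele G (Nat.zero_le _)
  have part2 : ∑ j ∈ Finset.Ico ((b : ℕ) + 1) L,
      X ^ (N * (if (b : ℕ) < j then 1 else 0)) * (G j - G (j + 1))
        = X ^ N * (G ((b : ℕ) + 1) - G L) := by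
    rw [Finset.sum_congr rfl (fun j hj => by
      simp only [Finset.mem_Ico] at hj
      rw [if_pos (by omega), Nat.mul_one])]
    rw [← Finset.mul_sum, tele G hbL]
  rw [part1, part2, hgtc]
  have hGL : G L = 0 := by simp only [hG]; rw [hTL, qInt_zero]
  have hG0 : G 0 = qInt X N := by simp only [hG, hT0]
  have hGb : G ((b : ℕ) + 1) = qInt X (T ((b : ℕ) + 1)) := by simp only [hG]
  rw [hGL, hG0, hGb]
  set g := T ((b : ℕ) + 1) with hg
  have hTle : ∀ k, T k ≤ T 0 := by
    intro k
    induction k with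
    | zero => exact le_refl _
    | succ k ih => exact le_trans (hTmono k) ih
  have hgle : g ≤ N := by rw [← hT0]; exact hTle _
  have e1 : qInt X N = qInt X g + X ^ g * qInt X (N - g) := by
    have h4 := qInt_add X g (N - g)
    rw [Nat.add_sub_cancel' hgle] at h4
    exact h4
  have e2 : qInt X N = qInt X (N - g) + X ^ (N - g) * qInt X g := by
    have h4 := qInt_add X (N - g) g
    rw [Nat.sub_add_cancel hgle] at h4
    exact h4
  have e3 : (X : RatFunc ℚ) ^ N = X ^ g * X ^ (N - g) := by
    rw [← pow_add]
    congr 1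
    omega
  rw [e3]
  linear_combination e1 - X ^ g * e2


lemma L5a (μ : Fin L → ℕ) (b : Fin L) (h : μ b ≠ 0) :
    Mq (Function.update μ b (μ b - 1)) * qInt X (∑ c, μ c) = Mq μ * qInt X (μ b) := by
  have hb : b ∈ (univ : Finset (Fin L)) := mem_univ b
  have hsum : ∑ c, μ c = μ b + ∑ c ∈ univ.erase b, μ c := (Finset.add_sum_erase _ μ hb).symm
  have hS : (∑ c, μ c) - 1 + 1 = ∑ c, μ c := by omega
  unfold Mq
  have ep : ∏ c, qFact X (Function.update μ b (μ b - 1) c)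
      = ∏ c, Function.update (fun c => qFact X (μ c)) b (qFact X (μ b - 1)) c :=
    Finset.prod_congr rfl (fun c _ => by rw [Function.apply_update (fun _ v => qFact X v) μ b _ c])
  rw [Finset.sum_update_of_mem hb, ep, Finset.prod_update_of_mem hb, ← Finset.erase_eq]
  have e1 : μ b - 1 + ∑ c ∈ univ.erase b, μ c = (∑ c, μ c) - 1 := by omega
  rw [e1]
  have e2 : ∏ c, qFact X (μ c) = qFact X (μ b) * ∏ c ∈ univ.erase b, qFact X (μ c) :=
    (Finset.mul_prod_erase _ _ hb).symm
  rw [e2]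
  have e3 : qFact X (∑ c, μ c) = qFact X ((∑ c, μ c) - 1) * qInt X (∑ c, μ c) := by
    conv_lhs => rw [← hS]
    rw [qFact_succ, hS]
  have e4 : qFact X (μ b) = qFact X (μ b - 1) * qInt X (μ b) := by
    conv_lhs => rw [show μ b = μ b - 1 + 1 by omega]
    rw [qFact_succ, show μ b - 1 + 1 = μ b by omega]
  rw [e3, e4]
  have n1 := qFact_X_ne_zero ((∑ c, μ c) - 1)
  have n2 := qFact_X_ne_zero (μ b - 1)
  have n3 : ∏ c ∈ univ.erase b, qFact X (μ c) ≠ 0 :=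
    Finset.prod_ne_zero_iff.mpr (fun c _ => qFact_X_ne_zero _)
  have n4 := qInt_X_ne_zero h
  field_simp

lemma L5 (μ : Fin L → ℕ) (b : Fin L) (hN : (∑ c, μ c) ≠ 0) :
    ∑ c : Fin L, (if μ c = 0 then 0 else
        X ^ (gtc c μ + (∑ d, μ d) * (if b < c then 1 else 0))
          * Mq (Function.update μ c (μ c - 1)))
      = X ^ (gtc b μ) * Mq μ := by
  have nInt := qInt_X_ne_zero hN
  have key : ∀ c : Fin L, (if μ c = 0 then 0 else
      X ^ (gtc c μ + (∑ d, μ d) * (if b < c then 1 else 0))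
        * Mq (Function.update μ c (μ c - 1)))
      = (Mq μ / qInt X (∑ d, μ d))
        * (X ^ (gtc c μ + (∑ d, μ d) * (if b < c then 1 else 0)) * qInt X (μ c)) := by
    intro c
    set e := gtc c μ + (∑ d, μ d) * (if b < c then 1 else 0) with he
    by_cases h : μ c = 0
    · rw [if_pos h, h, qInt_zero]
      ring
    · rw [if_neg h, div_mul_eq_mul_div, eq_comm, div_eq_iff nInt]
      linear_combination (-(X ^ e)) * (L5a μ c h)
  rw [Finset.sum_congr rfl (fun c _ => key c), ← Finset.mul_sum, L4 μ b]
  field_simp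

-- words
def cnt {N : ℕ} (w : Fin N → Fin L) (c : Fin L) : ℕ := (univ.filter fun i => w i = c).card

def WS (N : ℕ) (ν : Fin L → ℕ) : Finset (Fin N → Fin L) := univ.filter fun w => ∀ c, cnt w c = ν c

lemma mem_WS {N : ℕ} {ν : Fin L → ℕ} {w : Fin N → Fin L} : w ∈ WS N ν ↔ ∀ c, cnt w c = ν c := by
  simp [WS]

lemma cnt_card_ite {N : ℕ} (w : Fin N → Fin L) (c : Fin L) :
    cnt w c = ∑ i : Fin N, if w i = c then 1 else 0 := by
  rw [cnt, Finset.card_filter]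

lemma cnt_init {N : ℕ} (w : Fin (N + 1) → Fin L) (c : Fin L) :
    cnt w c = cnt (w ∘ Fin.castSucc) c + if w (Fin.last N) = c then 1 else 0 := by
  rw [cnt_card_ite w c, Fin.sum_univ_castSucc]
  congr 1
  rw [cnt_card_ite]
  simp [Function.comp]

lemma cnt_snoc {N : ℕ} (w' : Fin N → Fin L) (b c : Fin L) :
    cnt (Fin.snoc w' b : Fin (N + 1) → Fin L) c = cnt w' c + if b = c then 1 else 0 := by
  rw [cnt_init]
  congr 2
  · funext j
    simp
  · simp

def wext {N : ℕ} (w : Fin N → Fin L) : ℕ → ℤ := fun i => if h : i < N then ((w ⟨i, h⟩ : ℕ) : ℤ) else 0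

lemma wDes_congr {N : ℕ} {u u' : ℕ → ℤ} (h : ∀ i < N, u i = u' i) : wDes N u = wDes N u' := by
  unfold wDes
  apply Finset.filter_congr
  intro i hi
  simp only [Finset.mem_Ico] at hi
  rw [h i hi.2, h (i - 1) (by omega)]

lemma wMaj_congr {N : ℕ} {u u' : ℕ → ℤ} (h : ∀ i < N, u i = u' i) : wMaj N u = wMaj N u' := by
  unfold wMaj
  rw [wDes_congr h]

lemma wMaj_succ {N : ℕ} (hN : N ≠ 0) (u : ℕ → ℤ) :
    wMaj (N + 1) u = wMaj N u + if u N < u (N - 1) then N else 0 := by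
  unfold wMaj wDes
  have hins : Finset.Ico 1 (N + 1) = insert N (Finset.Ico 1 N) := by
    ext i
    simp only [Finset.mem_Ico, Finset.mem_insert]
    omega
  rw [hins, Finset.filter_insert]
  by_cases hd : u N < u (N - 1)
  · rw [if_pos hd, Finset.sum_insert (by simp), if_pos hd]
    omega
  · rw [if_neg hd, if_neg hd, add_zero]

lemma wMaj_zero' (u : ℕ → ℤ) : wMaj 0 u = 0 := by simp [wMaj, wDes]
lemma wMaj_one (u : ℕ → ℤ) : wMaj 1 u = 0 := by simp [wMaj, wDes]

lemma sum_update_pred (ν : Fin L → ℕ) (b : Fin L) (hb : ν b ≠ 0) :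
    ∑ c, Function.update ν b (ν b - 1) c = (∑ c, ν c) - 1 := by
  rw [Finset.sum_update_of_mem (mem_univ b), ← Finset.erase_eq]
  have h2 : ∑ c, ν c = ν b + ∑ c ∈ univ.erase b, ν c := (Finset.add_sum_erase _ ν (mem_univ b)).symm
  omega

lemma gtc_update (ν : Fin L → ℕ) (b : Fin L) (x : ℕ) :
    gtc b (Function.update ν b x) = gtc b ν := by
  apply Finset.sum_congr rfl
  intro c hc
  simp only [Finset.mem_filter] at hc
  exact Function.update_of_ne (by rintro rfl; exact lt_irrefl _ hc.2) _ _

lemma WS_last_empty {N : ℕ} (ν : Fin L → ℕ) (b : Fin L) (hb : ν b = 0) :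
    (WS (N + 1) ν).filter (fun w => w (Fin.last N) = b) = ∅ := by
  rw [Finset.eq_empty_iff_forall_notMem]
  intro w hw
  rw [Finset.mem_filter] at hw
  have h1 := mem_WS.mp hw.1 b
  have h2 : Fin.last N ∈ univ.filter (fun i => w i = b) := by
    simp [hw.2]
  have h3 := Finset.card_pos.mpr ⟨_, h2⟩
  rw [cnt] at h1
  omega

theorem Fb (N : ℕ) : ∀ (ν : Fin L → ℕ) (b : Fin L), (∑ c, ν c) = N + 1 →
    ∑ w ∈ (WS (N + 1) ν).filter (fun w => w (Fin.last N) = b), X ^ wMaj (N + 1) (wext w)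
      = if ν b = 0 then 0 else X ^ gtc b ν * Mq (Function.update ν b (ν b - 1)) := by
  induction N with
  | zero =>
    intro ν b hsum
    by_cases hb : ν b = 0
    · rw [if_pos hb, WS_last_empty ν b hb, Finset.sum_empty]
    · rw [if_neg hb]
      have hν : ∀ c, ν c = if c = b then 1 else 0 := by
        intro c
        have h2 : ∑ c, ν c = ν b + ∑ c ∈ univ.erase b, ν c :=
          (Finset.add_sum_erase _ ν (mem_univ b)).symm
        by_cases hc : c = b
        · subst hc
          rw [if_pos rfl]
          omega
        · rw [if_neg hc]
          have h3 : ∑ c ∈ univ.erase b, ν c = 0 := by omega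
          exact Finset.sum_eq_zero_iff.mp h3 c (by simp [hc])
      have hset : (WS 1 ν).filter (fun w => w (Fin.last 0) = b) = {fun _ => b} := by
        ext w
        simp only [Finset.mem_filter, Finset.mem_singleton, mem_WS]
        constructor
        · rintro ⟨h1, h2⟩
          funext i
          rw [Subsingleton.elim i (Fin.last 0), h2]
        · rintro rfl
          refine ⟨fun c => ?_, rfl⟩
          rw [cnt_card_ite, hν c]
          rw [Fin.sum_univ_one]
          by_cases hc : c = b
          · subst hc; simp
          · rw [if_neg hc, if_neg (fun h => hc h.symm)]
      rw [hset, Finset.sum_singleton, wMaj_one]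
      have hgtc0 : gtc b ν = 0 := Finset.sum_eq_zero (fun c hc => by
        simp only [Finset.mem_filter] at hc
        rw [hν c, if_neg (by rintro rfl; exact lt_irrefl _ hc.2)])
      have hupd : Function.update ν b (ν b - 1) = fun _ => 0 := by
        funext c
        by_cases hc : c = b
        · subst hc
          rw [Function.update_self]
          have := hν c
          simp at this
          omega
        · rw [Function.update_of_ne hc, hν c, if_neg hc]
      rw [hgtc0, hupd]
      have hMq : Mq (fun _ => 0 : Fin L → ℕ) = 1 := by
        unfold Mq qFact
        simp
      rw [hMq]
      simp
  | succ N IH =>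
    intro ν b hsum
    by_cases hb : ν b = 0
    · rw [if_pos hb, WS_last_empty ν b hb, Finset.sum_empty]
    · rw [if_neg hb]
      set μ : Fin L → ℕ := Function.update ν b (ν b - 1) with hμ
      have hμsum : (∑ c, μ c) = N + 1 := by
        rw [hμ, sum_update_pred ν b hb]
        omega
      have hμc : ∀ c, c ≠ b → μ c = ν c := fun c hc => Function.update_of_ne hc _ _
      have hμb : μ b = ν b - 1 := Function.update_self _ _ _
      have bij : ∑ w ∈ (WS (N + 2) ν).filter (fun w => w (Fin.last (N + 1)) = b),
            X ^ wMaj (N + 2) (wext w)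
          = ∑ w' ∈ WS (N + 1) μ,
              X ^ (wMaj (N + 1) (wext w') + (N + 1) * (if b < w' (Fin.last N) then 1 else 0)) := by
        apply Finset.sum_nbij' (i := fun w => w ∘ Fin.castSucc) (j := fun w' => Fin.snoc w' b)
        · intro w hw
          rw [Finset.mem_filter] at hw
          rw [mem_WS]
          intro c
          have h1 := mem_WS.mp hw.1 c
          rw [cnt_init, hw.2] at h1
          by_cases hc : c = b
          · subst hc
            rw [hμb]
            simp at h1
            omega
          · rw [hμc c hc]
            rw [if_neg (fun h => hc h.symm)] at h1
            omega
        · intro w' hw'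
          rw [Finset.mem_filter]
          constructor
          · rw [mem_WS]
            intro c
            rw [cnt_snoc]
            have h1 := mem_WS.mp hw' c
            by_cases hc : c = b
            · subst hc
              rw [if_pos rfl, h1, hμb]
              omega
            · rw [if_neg (fun h => hc h.symm), h1, hμc c hc]
              omega
          · simp
        · intro w hw
          rw [Finset.mem_filter] at hw
          rw [← hw.2]
          exact Fin.snoc_init_self w
        · intro w' hw'
          funext j
          simp
        · intro w hw
          rw [Finset.mem_filter] at hw
          congr 1
          have h1 : wMaj (N + 2) (wext w)
              = wMaj (N + 1) (wext w) + if wext w (N + 1) < wext w N then N + 1 else 0 :=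
            wMaj_succ (by omega) _
          have h2 : wMaj (N + 1) (wext w) = wMaj (N + 1) (wext (w ∘ Fin.castSucc)) := by
            apply wMaj_congr
            intro i hi
            unfold wext
            rw [dif_pos (by omega : i < N + 2), dif_pos hi]
            congr 1
          have h3 : wext w (N + 1) = ((b : ℕ) : ℤ) := by
            unfold wext
            rw [dif_pos (by omega : N + 1 < N + 2)]
            have : (⟨N + 1, by omega⟩ : Fin (N + 2)) = Fin.last (N + 1) := rfl
            rw [this, hw.2]
          have h4 : wext w N = (((w ∘ Fin.castSucc) (Fin.last N) : ℕ) : ℤ) := by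
            unfold wext
            rw [dif_pos (by omega : N < N + 2)]
            congr 1
          rw [h1, h2, h3, h4]
          congr 1
          by_cases hlt : b < (w ∘ Fin.castSucc) (Fin.last N)
          · rw [if_pos hlt, Nat.mul_one,
              if_pos (Int.ofNat_lt.mpr (Fin.lt_def.mp hlt))]
          · rw [if_neg hlt, Nat.mul_zero,
              if_neg (fun hc => hlt (Fin.lt_def.mpr (Int.ofNat_lt.mp hc)))]
      rw [bij]
      rw [← Finset.sum_fiberwise (WS (N + 1) μ) (fun w' => w' (Fin.last N))
        (fun w' => X ^ (wMaj (N + 1) (wext w') + (N + 1) * (if b < w' (Fin.last N) then 1 else 0)))]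
      have inner : ∀ b' : Fin L,
          (∑ w' ∈ (WS (N + 1) μ).filter (fun w' => w' (Fin.last N) = b'),
            X ^ (wMaj (N + 1) (wext w') + (N + 1) * (if b < w' (Fin.last N) then 1 else 0)))
          = X ^ ((N + 1) * (if b < b' then 1 else 0)) *
              (if μ b' = 0 then 0 else X ^ gtc b' μ * Mq (Function.update μ b' (μ b' - 1))) := by
        intro b'
        rw [← IH μ b' hμsum, Finset.mul_sum]
        apply Finset.sum_congr rfl
        intro w' hw'
        rw [Finset.mem_filter] at hw'
        rw [hw'.2, pow_add]
        ring
      rw [Finset.sum_congr rfl (fun b' _ => inner b')]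
      have merge : ∀ b' : Fin L,
          X ^ ((N + 1) * (if b < b' then 1 else 0)) *
              (if μ b' = 0 then 0 else X ^ gtc b' μ * Mq (Function.update μ b' (μ b' - 1)))
          = (if μ b' = 0 then 0 else
              X ^ (gtc b' μ + (∑ d, μ d) * (if b < b' then 1 else 0))
                * Mq (Function.update μ b' (μ b' - 1))) := by
        intro b'
        by_cases h0 : μ b' = 0
        · rw [if_pos h0, if_pos h0, mul_zero]
        · rw [if_neg h0, if_neg h0, hμsum, pow_add]
          ring
      rw [Finset.sum_congr rfl (fun b' _ => merge b')]
      rw [L5 μ b (by omega)]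
      rw [hμ, gtc_update]

theorem Wsum (N : ℕ) (ν : Fin L → ℕ) (h : (∑ c, ν c) = N) :
    ∑ w ∈ WS N ν, X ^ wMaj N (wext w) = Mq ν := by
  cases N with
  | zero =>
    have hν : ∀ c, ν c = 0 := by
      intro c
      have := Finset.single_le_sum (f := ν) (fun c _ => Nat.zero_le (ν c)) (mem_univ c)
      omega
    have hWS : WS 0 ν = univ := by
      rw [WS, Finset.filter_true_of_mem]
      intro w _
      intro c
      rw [hν c, cnt]
      simp
    rw [hWS]
    rw [Finset.sum_congr rfl (fun w _ => by rw [wMaj_zero', pow_zero])]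
    rw [Finset.sum_const, Finset.card_univ]
    have : Fintype.card (Fin 0 → Fin L) = 1 := by simp
    rw [this, one_smul]
    unfold Mq
    rw [h]
    have : ∏ c, qFact X (ν c) = 1 := by
      rw [Finset.prod_congr rfl (fun c _ => by rw [hν c])]
      simp [qFact]
    rw [this]
    simp [qFact]
  | succ N =>
    have hLpos : 0 < L := by
      by_contra hL
      push_neg at hL
      have hL0 : L = 0 := by omega
      subst hL0
      simp at h
    set top : Fin L := ⟨L - 1, by omega⟩ with htop
    have htopmax : ∀ c : Fin L, ¬ top < c := by
      intro c hc
      rw [Fin.lt_def] at hc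
      have := c.2
      simp only [htop] at hc
      omega
    rw [← Finset.sum_fiberwise (WS (N + 1) ν) (fun w => w (Fin.last N))
      (fun w => X ^ wMaj (N + 1) (wext w))]
    rw [Finset.sum_congr rfl (fun b' _ => Fb N ν b' h)]
    have key : ∀ b' : Fin L,
        (if ν b' = 0 then 0 else X ^ gtc b' ν * Mq (Function.update ν b' (ν b' - 1)))
        = (if ν b' = 0 then 0 else
            X ^ (gtc b' ν + (∑ d, ν d) * (if top < b' then 1 else 0))
              * Mq (Function.update ν b' (ν b' - 1))) := by
      intro b'
      rw [if_neg (htopmax b'), Nat.mul_zero, Nat.add_zero]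
    rw [Finset.sum_congr rfl (fun b' _ => key b')]
    rw [L5 ν top (by omega)]
    have hgtct : gtc top ν = 0 := by
      apply Finset.sum_eq_zero
      intro c hc
      simp only [Finset.mem_filter] at hc
      exact absurd hc.2 (htopmax c)
    rw [hgtct, pow_zero, one_mul]


-- Part D

variable (t : ℕ) (m : ℕ → ℕ) (n : ℕ)

def blk (v : ℕ) : ℕ := ((range (t + 1)).filter fun s => m (s + 1) ≤ v).card

variable {t m n}

lemma m_mono (hmono : ∀ s, s ≤ t → m s < m (s + 1)) :
    ∀ a b, a ≤ b → b ≤ t + 1 → m a ≤ m b := by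
  intro a b hab hb
  induction b with
  | zero =>
    have : a = 0 := by omega
    subst this
    exact le_refl _
  | succ b ih =>
    rcases Nat.eq_or_lt_of_le hab with h | h
    · subst h; exact le_refl _
    · exact le_trans (ih (by omega) (by omega)) (le_of_lt (hmono b (by omega)))

lemma m_strict (hmono : ∀ s, s ≤ t → m s < m (s + 1)) :
    ∀ a b, a < b → b ≤ t + 1 → m a < m b := by
  intro a b hab hb
  have h1 : m a ≤ m (b - 1) := m_mono hmono a (b - 1) (by omega) (by omega)
  have h2 : m (b - 1) < m (b - 1 + 1) := hmono (b - 1) (by omega)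
  have : b - 1 + 1 = b := by omega
  rw [this] at h2
  omega

lemma blk_mono {u v : ℕ} (huv : u ≤ v) : blk t m u ≤ blk t m v := by
  apply Finset.card_le_card
  intro s hs
  simp only [Finset.mem_filter, Finset.mem_range] at hs ⊢
  omega

lemma blk_eq (hmono : ∀ s, s ≤ t → m s < m (s + 1)) {v s : ℕ} (hs : s ≤ t)
    (h1 : m s ≤ v) (h2 : v < m (s + 1)) : blk t m v = s := by
  unfold blk
  have : (range (t + 1)).filter (fun s' => m (s' + 1) ≤ v) = range s := by
    ext s'
    simp only [Finset.mem_filter, Finset.mem_range]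
    constructor
    · rintro ⟨h3, h4⟩
      by_contra h5
      have : m (s + 1) ≤ m (s' + 1) := m_mono hmono (s + 1) (s' + 1) (by omega) (by omega)
      omega
    · intro h3
      refine ⟨by omega, ?_⟩
      have : m (s' + 1) ≤ m s := m_mono hmono (s' + 1) s (by omega) (by omega)
      omega
  rw [this, Finset.card_range]

lemma exists_blk (h0 : m 0 = 0) (hlast : m (t + 1) = n)
    (hmono : ∀ s, s ≤ t → m s < m (s + 1)) {v : ℕ} (hv : v < n) :
    ∃ s, s ≤ t ∧ m s ≤ v ∧ v < m (s + 1) := by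
  have h0S : (0 : ℕ) ∈ (range (t + 1)).filter (fun s => m s ≤ v) := by
    simp [h0]
  have hne : ((range (t + 1)).filter (fun s => m s ≤ v)).Nonempty := ⟨0, h0S⟩
  obtain ⟨s, hsmem, hsmax⟩ := Finset.exists_max_image _ id hne
  simp only [Finset.mem_filter, Finset.mem_range] at hsmem
  refine ⟨s, by omega, hsmem.2, ?_⟩
  by_cases hst : s = t
  · subst hst
    omega
  · by_contra hle
    push_neg at hle
    have hmem2 : s + 1 ∈ (range (t + 1)).filter (fun s => m s ≤ v) := by
      simp only [Finset.mem_filter, Finset.mem_range]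
      exact ⟨by omega, hle⟩
    have := hsmax (s + 1) hmem2
    simp only [id] at this
    omega

lemma blk_bounds (h0 : m 0 = 0) (hlast : m (t + 1) = n)
    (hmono : ∀ s, s ≤ t → m s < m (s + 1)) {v : ℕ} (hv : v < n) :
    blk t m v ≤ t ∧ m (blk t m v) ≤ v ∧ v < m (blk t m v + 1) := by
  obtain ⟨s, hs, h1, h2⟩ := exists_blk h0 hlast hmono hv
  rw [blk_eq hmono hs h1 h2]
  exact ⟨hs, h1, h2⟩

/-- the word of blocks of a permutation -/
def wp (h0 : m 0 = 0) (hlast : m (t + 1) = n) (hmono : ∀ s, s ≤ t → m s < m (s + 1))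
    (π : Equiv.Perm (Fin n)) : Fin n → Fin (t + 1) :=
  fun i => ⟨blk t m (π i), by
    have := (blk_bounds h0 hlast hmono (π i).2).1
    omega⟩

def OK (π : Equiv.Perm (Fin n)) : Prop :=
  ∀ i j : Fin n, ((π i : ℕ) < (π j : ℕ)) → blk t m (π i) = blk t m (π j) → (i : ℕ) < (j : ℕ)


lemma mem_sDes {n : ℕ} (σ : Equiv.Perm (Fin n)) {i : ℕ} (h1 : 1 ≤ i) (h2 : i < n) :
    i ∈ sDes n σ ↔ (σ ⟨i, h2⟩ : ℕ) < (σ ⟨i - 1, by omega⟩ : ℕ) := by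
  unfold sDes wDes
  rw [Finset.mem_filter, Finset.mem_Ico]
  unfold sword
  rw [dif_pos h2, dif_pos (show i - 1 < n by omega)]
  constructor
  · rintro ⟨-, hlt⟩
    omega
  · intro hlt
    exact ⟨⟨h1, h2⟩, by omega⟩

lemma blk_lt_of_image (hmono : ∀ s, s ≤ t → m s < m (s + 1)) {j s : ℕ}
    (hs1 : 1 ≤ s) (hs2 : s ≤ t) (hm : m s = j + 1) : blk t m j < blk t m (j + 1) := by
  apply Finset.card_lt_card
  rw [Finset.ssubset_iff_of_subset]
  · refine ⟨s - 1, ?_, ?_⟩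
    · simp only [Finset.mem_filter, Finset.mem_range]
      constructor
      · omega
      · rw [show s - 1 + 1 = s by omega]
        omega
    · simp only [Finset.mem_filter, Finset.mem_range]
      rw [show s - 1 + 1 = s by omega]
      rintro ⟨-, h⟩
      omega
  · intro s' hs'
    simp only [Finset.mem_filter, Finset.mem_range] at hs' ⊢
    omega

lemma blk_eq_of_not_image (hlast : m (t + 1) = n) {i : ℕ} (hi1 : 1 ≤ i) (hi2 : i < n)
    (hnot : i ∉ (Finset.Icc 1 t).image m) : blk t m (i - 1) = blk t m i := by
  unfold blk
  congr 1
  ext s'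
  simp only [Finset.mem_filter, Finset.mem_range]
  constructor
  · rintro ⟨hr, hle⟩
    exact ⟨hr, by omega⟩
  · rintro ⟨hr, hle⟩
    refine ⟨hr, ?_⟩
    by_contra hgt
    have heq : m (s' + 1) = i := by omega
    by_cases hst : s' + 1 ≤ t
    · exact hnot (Finset.mem_image.mpr ⟨s' + 1, Finset.mem_Icc.mpr ⟨by omega, hst⟩, heq⟩)
    · have : s' + 1 = t + 1 := by omega
      rw [this, hlast] at heq
      omega

lemma cond_iff_OK (h0 : m 0 = 0) (hlast : m (t + 1) = n)
    (hmono : ∀ s, s ≤ t → m s < m (s + 1)) (π : Equiv.Perm (Fin n)) :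
    sDes n π⁻¹ ⊆ (Finset.Icc 1 t).image m ↔ OK (t := t) (m := m) π := by
  constructor
  · intro hsub
    have step : ∀ j, (hj : j + 1 < n) → blk t m j = blk t m (j + 1) →
        (π.symm ⟨j, by omega⟩ : ℕ) < (π.symm ⟨j + 1, hj⟩ : ℕ) := by
      intro j hj hblk
      by_contra hge
      push_neg at hge
      have hne : (π.symm ⟨j + 1, hj⟩ : ℕ) ≠ (π.symm ⟨j, by omega⟩ : ℕ) := by
        intro h
        have : π.symm ⟨j + 1, hj⟩ = π.symm ⟨j, by omega⟩ := Fin.ext h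
        have := π.symm.injective this
        simp only [Fin.mk.injEq] at this
        omega
      have hlt : (π.symm ⟨j + 1, hj⟩ : ℕ) < (π.symm ⟨j, by omega⟩ : ℕ) := by omega
      have hdes : (j + 1) ∈ sDes n π⁻¹ := by
        rw [mem_sDes π⁻¹ (by omega) hj]
        have he : (⟨j + 1 - 1, by omega⟩ : Fin n) = ⟨j, by omega⟩ := by
          apply Fin.ext
          simp
        rw [he]
        simp only [Equiv.Perm.inv_def]
        exact hlt
      obtain ⟨s, hs, hms⟩ := Finset.mem_image.mp (hsub hdes)
      rw [Finset.mem_Icc] at hs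
      have := blk_lt_of_image hmono hs.1 hs.2 hms
      omega
    have chain : ∀ d j, (hj : j + d + 1 < n) → blk t m j = blk t m (j + d + 1) →
        (π.symm ⟨j, by omega⟩ : ℕ) < (π.symm ⟨j + d + 1, hj⟩ : ℕ) := by
      intro d
      induction d with
      | zero =>
        intro j hj hblk
        exact step j hj hblk
      | succ d ih =>
        intro j hj hblk
        rw [show j + (d + 1) + 1 = j + d + 1 + 1 from by omega] at hblk
        have hb1 : blk t m j = blk t m (j + d + 1) := by
          have g1 := blk_mono (t := t) (m := m) (show j ≤ j + d + 1 by omega)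
          have g2 := blk_mono (t := t) (m := m) (show j + d + 1 ≤ j + d + 1 + 1 by omega)
          omega
        have hb2 : blk t m (j + d + 1) = blk t m (j + d + 1 + 1) := by
          have g1 := blk_mono (t := t) (m := m) (show j ≤ j + d + 1 by omega)
          have g2 := blk_mono (t := t) (m := m) (show j + d + 1 ≤ j + d + 1 + 1 by omega)
          omega
        have i1 := ih j (by omega) hb1
        have i2 := step (j + d + 1) (by omega : j + d + 1 + 1 < n) hb2
        have he : (⟨j + d + 1 + 1, by omega⟩ : Fin n) = ⟨j + (d + 1) + 1, hj⟩ := by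
          apply Fin.ext; simp; omega
        rw [he] at i2
        omega
    intro i j hv hblk
    have hc := chain ((π j : ℕ) - (π i : ℕ) - 1) (π i : ℕ)
      (by have := (π j).2; omega)
      (by rw [show (π i : ℕ) + ((π j : ℕ) - (π i : ℕ) - 1) + 1 = (π j : ℕ) by omega]; exact hblk)
    have e1 : (⟨(π i : ℕ), by have := (π i).2; omega⟩ : Fin n) = π i := by apply Fin.ext; rfl
    have e2 : (⟨(π i : ℕ) + ((π j : ℕ) - (π i : ℕ) - 1) + 1, by have := (π j).2; omega⟩ : Fin n) = π j := by
      apply Fin.ext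
      show (π i : ℕ) + ((π j : ℕ) - (π i : ℕ) - 1) + 1 = (π j : ℕ)
      omega
    rw [e1, e2] at hc
    simp only [Equiv.symm_apply_apply] at hc
    exact hc
  · intro hOK i hi
    have hIco : 1 ≤ i ∧ i < n := by
      have := (Finset.mem_filter.mp hi).1
      rw [Finset.mem_Ico] at this
      exact this
    have hdes := (mem_sDes π⁻¹ hIco.1 hIco.2).mp hi
    by_contra hnot
    have hblk := blk_eq_of_not_image hlast hIco.1 hIco.2 hnot
    have happ := hOK (π.symm ⟨i - 1, by omega⟩) (π.symm ⟨i, hIco.2⟩)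
    simp only [Equiv.apply_symm_apply] at happ
    have := happ (show i - 1 < i by omega) (show blk t m (i - 1) = blk t m i from hblk)
    simp only [Equiv.Perm.inv_def] at hdes
    omega


lemma maj_eq (h0 : m 0 = 0) (hlast : m (t + 1) = n) (hmono : ∀ s, s ≤ t → m s < m (s + 1))
    (π : Equiv.Perm (Fin n)) (hOK : OK (t := t) (m := m) π) :
    sMaj n π = wMaj n (wext (wp h0 hlast hmono π)) := by
  unfold sMaj wMaj
  congr 1
  unfold wDes
  apply Finset.filter_congr
  intro i hi
  rw [Finset.mem_Ico] at hi
  unfold sword wext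
  rw [dif_pos hi.2, dif_pos (show i - 1 < n by omega), dif_pos hi.2,
    dif_pos (show i - 1 < n by omega)]
  have hwpv : ∀ k (hk : k < n),
      ((wp h0 hlast hmono π ⟨k, hk⟩ : ℕ) : ℤ) = (blk t m (π ⟨k, hk⟩) : ℤ) := by
    intro k hk; rfl
  rw [hwpv, hwpv]
  constructor
  · intro hlt
    have hvlt : (π ⟨i, hi.2⟩ : ℕ) < (π ⟨i - 1, by omega⟩ : ℕ) := by omega
    have hble := blk_mono (t := t) (m := m) (le_of_lt hvlt)
    have hne : blk t m (π ⟨i, hi.2⟩) ≠ blk t m (π ⟨i - 1, by omega⟩) := by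
      intro he
      have h9 : i < i - 1 := hOK _ _ hvlt he
      omega
    have : (blk t m (π ⟨i, hi.2⟩) : ℤ) < blk t m (π ⟨i - 1, by omega⟩) := by
      exact_mod_cast lt_of_le_of_ne hble hne
    omega
  · intro hlt
    by_contra hge
    have hge' : (π ⟨i - 1, by omega⟩ : ℕ) ≤ (π ⟨i, hi.2⟩ : ℕ) := by omega
    have := blk_mono (t := t) (m := m) hge'
    omega

lemma cnt_wp (h0 : m 0 = 0) (hlast : m (t + 1) = n) (hmono : ∀ s, s ≤ t → m s < m (s + 1))
    (π : Equiv.Perm (Fin n)) (c : Fin (t + 1)) :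
    cnt (wp h0 hlast hmono π) c = m ((c : ℕ) + 1) - m (c : ℕ) := by
  have e1 : (univ.filter fun i : Fin n => wp h0 hlast hmono π i = c).card
      = (univ.filter fun v : Fin n => blk t m (v : ℕ) = (c : ℕ)).card := by
    apply Finset.card_bij (fun i _ => π i)
    · intro i hi
      simp only [Finset.mem_filter, Finset.mem_univ, true_and] at hi ⊢
      exact congrArg Fin.val hi
    · intro i _ i' _ he
      exact π.injective he
    · intro v hv
      simp only [Finset.mem_filter, Finset.mem_univ, true_and] at hv
      refine ⟨π.symm v, ?_, by simp⟩
      simp only [Finset.mem_filter, Finset.mem_univ, true_and]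
      apply Fin.ext
      show blk t m (π (π.symm v)) = (c : ℕ)
      rw [Equiv.apply_symm_apply]
      exact hv
  have e2 : (univ.filter fun v : Fin n => blk t m (v : ℕ) = (c : ℕ)).card
      = (Finset.Ico (m (c : ℕ)) (m ((c : ℕ) + 1))).card := by
    refine Finset.card_bij (fun v _ => (v : ℕ)) ?_ ?_ ?_
    · intro v hv
      simp only [Finset.mem_filter, Finset.mem_univ, true_and] at hv
      rw [Finset.mem_Ico]
      have hb := blk_bounds h0 hlast hmono v.2
      rw [hv] at hb
      exact ⟨hb.2.1, hb.2.2⟩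
    · intro v _ v' _ he
      exact Fin.ext he
    · intro x hx
      rw [Finset.mem_Ico] at hx
      have hc : (c : ℕ) ≤ t := by have := c.2; omega
      have hxn : x < n := by
        have h1 : m ((c : ℕ) + 1) ≤ m (t + 1) := m_mono hmono _ _ (by omega) (le_refl _)
        omega
      refine ⟨⟨x, hxn⟩, ?_, rfl⟩
      simp only [Finset.mem_filter, Finset.mem_univ, true_and]
      exact blk_eq hmono hc hx.1 hx.2
  rw [cnt, e1, e2, Nat.card_Ico]

def rk (w : Fin n → Fin (t + 1)) (i : Fin n) : ℕ :=
  (univ.filter fun j => j < i ∧ w j = w i).card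

lemma rk_lt_rk {w : Fin n → Fin (t + 1)} {i i' : Fin n} (h : i < i') (he : w i = w i') :
    rk (t := t) w i < rk (t := t) w i' := by
  apply Finset.card_lt_card
  rw [Finset.ssubset_iff_of_subset]
  · refine ⟨i, ?_, ?_⟩
    · simp only [Finset.mem_filter, Finset.mem_univ, true_and]
      exact ⟨h, he⟩
    · simp only [Finset.mem_filter, Finset.mem_univ, true_and, not_and]
      intro hc
      exact absurd hc (lt_irrefl i)
  · intro j hj
    simp only [Finset.mem_filter, Finset.mem_univ, true_and] at hj ⊢
    exact ⟨lt_trans hj.1 h, hj.2.trans he⟩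

lemma rk_lt_cnt (w : Fin n → Fin (t + 1)) (i : Fin n) : rk (t := t) w i < cnt w (w i) := by
  apply Finset.card_lt_card
  rw [Finset.ssubset_iff_of_subset]
  · refine ⟨i, by simp, ?_⟩
    simp only [Finset.mem_filter, Finset.mem_univ, true_and, not_and]
    intro hc
    exact absurd hc (lt_irrefl i)
  · intro j hj
    simp only [Finset.mem_filter, Finset.mem_univ, true_and] at hj ⊢
    exact hj.2

lemma valEq (h0 : m 0 = 0) (hlast : m (t + 1) = n) (hmono : ∀ s, s ≤ t → m s < m (s + 1))
    (π : Equiv.Perm (Fin n)) (hOK : OK (t := t) (m := m) π) (i : Fin n) :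
    (π i : ℕ) = m (blk t m (π i)) + rk (t := t) (wp h0 hlast hmono π) i := by
  have hbnd := blk_bounds h0 hlast hmono (π i).2
  set b := blk t m (π i) with hb
  have hwp_iff : ∀ j : Fin n, wp h0 hlast hmono π j = wp h0 hlast hmono π i
      ↔ blk t m (π j) = b := by
    intro j
    constructor
    · intro he
      exact congrArg Fin.val he
    · intro he
      apply Fin.ext
      exact he
  have e1 : rk (t := t) (wp h0 hlast hmono π) i
      = (univ.filter fun v : Fin n => (v : ℕ) < (π i : ℕ) ∧ blk t m (v : ℕ) = b).card := by
    unfold rk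
    apply Finset.card_bij (fun j _ => π j)
    · intro j hj
      simp only [Finset.mem_filter, Finset.mem_univ, true_and] at hj ⊢
      obtain ⟨hji, hwe⟩ := hj
      have hbe : blk t m (π j) = b := (hwp_iff j).mp hwe
      refine ⟨?_, hbe⟩
      rcases lt_trichotomy (π j : ℕ) (π i : ℕ) with h | h | h
      · exact h
      · exact absurd (π.injective (Fin.ext h)) (by intro hc; subst hc; exact absurd hji (lt_irrefl _))
      · have := hOK i j h (by rw [hbe])
        rw [Fin.lt_def] at hji
        omega
    · intro j _ j' _ he
      exact π.injective he
    · intro v hv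
      simp only [Finset.mem_filter, Finset.mem_univ, true_and] at hv
      refine ⟨π.symm v, ?_, by simp⟩
      simp only [Finset.mem_filter, Finset.mem_univ, true_and]
      have hπv : π (π.symm v) = v := Equiv.apply_symm_apply π v
      constructor
      · rw [Fin.lt_def]
        apply hOK
        · rw [hπv]; exact hv.1
        · rw [hπv, hv.2]
      · exact (hwp_iff _).mpr (by rw [hπv]; exact hv.2)
  have e2 : (univ.filter fun v : Fin n => (v : ℕ) < (π i : ℕ) ∧ blk t m (v : ℕ) = b).card
      = (Finset.Ico (m b) ((π i : ℕ))).card := by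
    refine Finset.card_bij (fun v _ => (v : ℕ)) ?_ ?_ ?_
    · intro v hv
      simp only [Finset.mem_filter, Finset.mem_univ, true_and] at hv
      rw [Finset.mem_Ico]
      have hbv := blk_bounds h0 hlast hmono v.2
      rw [hv.2] at hbv
      exact ⟨hbv.2.1, hv.1⟩
    · intro v _ v' _ he
      exact Fin.ext he
    · intro x hx
      rw [Finset.mem_Ico] at hx
      have hxn : x < n := by have := (π i).2; omega
      refine ⟨⟨x, hxn⟩, ?_, rfl⟩
      simp only [Finset.mem_filter, Finset.mem_univ, true_and]
      refine ⟨hx.2, ?_⟩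
      exact blk_eq hmono hbnd.1 hx.1 (by omega)
  rw [e1, e2, Nat.card_Ico]
  omega

lemma wp_inj (h0 : m 0 = 0) (hlast : m (t + 1) = n) (hmono : ∀ s, s ≤ t → m s < m (s + 1))
    {π π' : Equiv.Perm (Fin n)} (hOK : OK (t := t) (m := m) π) (hOK' : OK (t := t) (m := m) π')
    (he : wp h0 hlast hmono π = wp h0 hlast hmono π') : π = π' := by
  apply Equiv.ext
  intro i
  have v1 := valEq h0 hlast hmono π hOK i
  have v2 := valEq h0 hlast hmono π' hOK' i
  have hb : blk t m (π i) = blk t m (π' i) :=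
    congrArg (fun w => ((w i : Fin (t + 1)) : ℕ)) he
  apply Fin.ext
  rw [v1, v2, hb, he]


lemma wp_surj (h0 : m 0 = 0) (hlast : m (t + 1) = n) (hmono : ∀ s, s ≤ t → m s < m (s + 1))
    (w : Fin n → Fin (t + 1)) (hw : ∀ c, cnt w c = m ((c : ℕ) + 1) - m (c : ℕ)) :
    ∃ π : Equiv.Perm (Fin n), OK (t := t) (m := m) π ∧ wp h0 hlast hmono π = w := by
  have hmle : ∀ c : Fin (t + 1), m (c : ℕ) ≤ m ((c : ℕ) + 1) := by
    intro c
    exact le_of_lt (hmono (c : ℕ) (by have := c.2; omega))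
  have hbound : ∀ i : Fin n, m ((w i : ℕ)) + rk (t := t) w i < n := by
    intro i
    have h1 := rk_lt_cnt (t := t) w i
    have h2 := hw (w i)
    have h3 : m ((w i : ℕ) + 1) ≤ n := by
      rw [← hlast]
      exact m_mono hmono _ _ (by have := (w i).2; omega) (le_refl _)
    have h4 := hmle (w i)
    omega
  set f : Fin n → Fin n := fun i => ⟨m ((w i : ℕ)) + rk (t := t) w i, hbound i⟩ with hf
  have hval : ∀ i, (f i : ℕ) = m ((w i : ℕ)) + rk (t := t) w i := fun i => rfl
  have hblkf : ∀ i, blk t m (f i) = (w i : ℕ) := by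
    intro i
    have h1 := rk_lt_cnt (t := t) w i
    have h2 := hw (w i)
    apply blk_eq hmono (by have := (w i).2; omega)
    · rw [hval]; omega
    · rw [hval]
      have h4 := hmle (w i)
      omega
  have hinj : Function.Injective f := by
    intro i i' he
    have hbe : (w i : ℕ) = (w i' : ℕ) := by rw [← hblkf i, ← hblkf i', he]
    have hwe : w i = w i' := Fin.ext hbe
    have hve : (f i : ℕ) = (f i' : ℕ) := by rw [he]
    rw [hval, hval, hbe] at hve
    have hrk : rk (t := t) w i = rk (t := t) w i' := by omega
    by_contra hne
    rcases lt_or_gt_of_ne hne with h | h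
    · exact absurd hrk (ne_of_lt (rk_lt_rk h hwe))
    · exact absurd hrk.symm (ne_of_lt (rk_lt_rk h hwe.symm))
  have hbij : Function.Bijective f := Finite.injective_iff_bijective.mp hinj
  refine ⟨Equiv.ofBijective f hbij, ?_, ?_⟩
  · intro i j hlt hblk
    have happ : ∀ k, (Equiv.ofBijective f hbij) k = f k := fun k => rfl
    rw [happ, happ] at hlt hblk
    rw [hblkf, hblkf] at hblk
    have hwe : w i = w j := Fin.ext hblk
    rw [hval, hval, hblk] at hlt
    have hrk : rk (t := t) w i < rk (t := t) w j := by omega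
    rcases lt_trichotomy i j with h | h | h
    · exact h
    · subst h; exact absurd hrk (lt_irrefl _)
    · exact absurd (rk_lt_rk h hwe.symm) (by omega)
  · funext i
    apply Fin.ext
    show blk t m ((Equiv.ofBijective f hbij) i : ℕ) = (w i : ℕ)
    exact hblkf i

lemma perm_sum (h0 : m 0 = 0) (hlast : m (t + 1) = n) (hmono : ∀ s, s ≤ t → m s < m (s + 1)) :
    ∑ π ∈ (univ : Finset (Equiv.Perm (Fin n))).filter
        (fun π => sDes n π⁻¹ ⊆ (Finset.Icc 1 t).image m), X ^ sMaj n π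
      = ∑ w ∈ WS n (fun c : Fin (t + 1) => m ((c : ℕ) + 1) - m (c : ℕ)),
          X ^ wMaj n (wext w) := by
  refine Finset.sum_bij (fun π _ => wp h0 hlast hmono π) ?_ ?_ ?_ ?_
  · intro π hπ
    rw [mem_WS]
    intro c
    exact cnt_wp h0 hlast hmono π c
  · intro π hπ π' hπ' he
    rw [Finset.mem_filter] at hπ hπ'
    exact wp_inj h0 hlast hmono ((cond_iff_OK h0 hlast hmono π).mp hπ.2)
      ((cond_iff_OK h0 hlast hmono π').mp hπ'.2) he
  · intro w hw
    obtain ⟨π, hOK, hwp⟩ := wp_surj h0 hlast hmono w (mem_WS.mp hw)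
    refine ⟨π, ?_, hwp⟩
    rw [Finset.mem_filter]
    exact ⟨Finset.mem_univ π, (cond_iff_OK h0 hlast hmono π).mpr hOK⟩
  · intro π hπ
    rw [Finset.mem_filter] at hπ
    rw [maj_eq h0 hlast hmono π ((cond_iff_OK h0 hlast hmono π).mp hπ.2)]

end GG


/-- Garsia–Gessel. -/
theorem stmt5 (n t : ℕ) (m : ℕ → ℕ) (h0 : m 0 = 0) (hlast : m (t + 1) = n)
    (hmono : ∀ s, s ≤ t → m s < m (s + 1)) :
    (∑ π : Equiv.Perm (Fin n),
        if sDes n π⁻¹ ⊆ (Finset.Icc 1 t).image m then 𝕢 ^ sMaj n π else 0) =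
      qFact 𝕢 n / ∏ s ∈ Finset.range (t + 1), qFact 𝕢 (m (s + 1) - m s) := by
  classical
  have htel : ∀ k, k ≤ t + 1 → ∑ s ∈ Finset.range k, (m (s + 1) - m s) = m k := by
    intro k
    induction k with
    | zero => intro _; simp [h0]
    | succ k ih =>
      intro hk
      rw [Finset.sum_range_succ, ih (by omega)]
      have : m k ≤ m (k + 1) := le_of_lt (hmono k (by omega))
      omega
  have hsum : ∑ c : Fin (t + 1), (m ((c : ℕ) + 1) - m (c : ℕ)) = n := by
    rw [Fin.sum_univ_eq_sum_range (fun s => m (s + 1) - m s) (t + 1), htel (t + 1) le_rfl, hlast]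
  have key := GG.perm_sum (t := t) (m := m) (n := n) h0 hlast hmono
  have wsum := GG.Wsum n (fun c : Fin (t + 1) => m ((c : ℕ) + 1) - m (c : ℕ)) hsum
  rw [← Finset.sum_filter, key, wsum, GG.Mq, hsum]
  congr 1
  exact Fin.prod_univ_eq_prod_range (fun s => qFact RatFunc.X (m (s + 1) - m s)) (t + 1)


end Statements
end

section
/- Let σ ∈ B_n and M = {m_1 < ... < m_t} ⊆ [0,n-1], with m_{t+1} = n. Then Des_B(σ⁻¹) ⊆ M if and only if there exist unique integers r_1,...,r_t with m_i ≤ r_i ≤ m_{i+1} for all i such that (σ(1),...,σ(n)) is a shuffle of the increasing sequences (1,...,m_1), (-r_1,...,-(m_1+1)), (r_1+1,...,m_2), ..., (-r_t,...,-(m_t+1)), (r_t+1,...,n). -/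
open Finset

noncomputable section Statements

open Finset RatFunc

local notation "𝕢" => (RatFunc.X : RatFunc ℚ)


namespace Stmt9Aux

lemma perm_apply_inv_self (f : Equiv.Perm ℤ) (x : ℤ) : f (f⁻¹ x) = x := f.apply_symm_apply x

lemma perm_inv_apply_self (f : Equiv.Perm ℤ) (x : ℤ) : f⁻¹ (f x) = x := f.symm_apply_apply x

/-- extract indices from a two-element sublist. -/
lemma pair_sublist {α : Type} {a b : α} {l : List α} (h : List.Sublist [a, b] l) :
    ∃ p q, p < q ∧ q < l.length ∧ l[p]? = some a ∧ l[q]? = some b := by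
  obtain ⟨f, hf⟩ := List.sublist_iff_exists_orderEmbedding_getElem?_eq.mp h
  refine ⟨f 0, f 1, f.strictMono (by norm_num), ?_, ?_, ?_⟩
  · have h1 := (hf 1).symm
    simp only [List.getElem?_cons_succ, List.getElem?_cons_zero] at h1
    rw [List.getElem?_eq_some_iff] at h1
    exact h1.choose
  · exact (hf 0).symm
  · exact (hf 1).symm

lemma sublist_map_range {α : Type} (w : ℕ → α) (n : ℕ) (l : List α) (idx : ℕ → ℕ)
    (hmono : ∀ j k, j < k → k < l.length → idx j < idx k)
    (hlt : ∀ j, j < l.length → idx j < n)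
    (hval : ∀ j (h : j < l.length), l.get ⟨j, h⟩ = w (idx j)) :
    List.Sublist l ((List.range n).map w) := by
  classical
  set L := l.length with hL
  let g : ℕ → ℕ := fun j => if j < L then idx j else n + j
  have hg : StrictMono g := by
    intro j k hjk
    simp only [g]
    by_cases hk : k < L
    · have hj : j < L := hjk.trans hk
      simp only [hj, hk, if_true]
      exact hmono j k hjk hk
    · by_cases hj : j < L
      · simp only [hj, hk, if_true, if_false]
        have := hlt j hj; omega
      · simp only [hj, hk, if_false]; omega
  refine List.sublist_of_orderEmbedding_getElem?_eq (OrderEmbedding.ofStrictMono g hg) ?_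
  intro ix
  by_cases hix : ix < L
  · have hg2 : g ix = idx ix := if_pos hix
    have hlt2 : idx ix < n := hlt ix hix
    rw [List.getElem?_eq_getElem hix]
    have : ((List.range n).map w)[g ix]? = some (w (idx ix)) := by
      rw [hg2, List.getElem?_map, List.getElem?_range hlt2]
      rfl
    rw [OrderEmbedding.coe_ofStrictMono]
    rw [this]; exact congrArg some (hval ix hix)
  · have hg2 : g ix = n + ix := if_neg hix
    rw [OrderEmbedding.coe_ofStrictMono]
    rw [List.getElem?_eq_none (by omega), List.getElem?_eq_none (by simp [hg2])]

lemma mem_prog {L : ℕ} {c x : ℤ} :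
    x ∈ (List.range L).map (fun k : ℕ => c + (k : ℤ)) ↔ c ≤ x ∧ x < c + L := by
  simp only [List.mem_map, List.mem_range]
  constructor
  · rintro ⟨k, hk, rfl⟩
    constructor <;> [omega; (push_cast; omega)]
  · rintro ⟨h1, h2⟩
    refine ⟨(x - c).toNat, by omega, by omega⟩

lemma pair_prog {L : ℕ} {c x : ℤ} (h1 : c ≤ x) (h2 : x + 1 < c + L) :
    List.Sublist [x, x + 1] ((List.range L).map (fun k : ℕ => c + (k : ℤ))) := by
  apply sublist_map_range (fun k : ℕ => c + (k : ℤ)) L [x, x+1] (fun j => (x - c).toNat + j)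
  · intro j k hjk _; omega
  · intro j hj
    simp only [List.length_cons, List.length_nil] at hj
    omega
  · intro j hj
    simp only [List.length_cons, List.length_nil] at hj
    interval_cases j <;> simp <;> omega

lemma mono_consec (f : ℕ → ℤ) (a b : ℕ) (h : ∀ k, a ≤ k → k < b → f k < f (k + 1)) :
    ∀ u v, a ≤ u → u < v → v ≤ b → f u < f v := by
  intro u v hu huv hv
  induction v, huv using Nat.le_induction with
  | base => exact h u hu (by omega)
  | succ v hv' ih =>
      exact lt_trans (ih (by omega)) (h v (by omega) (by omega))

lemma initial_seg (m m' : ℕ) (P : ℕ → Prop) [DecidablePred P]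
    (hdc : ∀ u v, m + 1 ≤ u → u ≤ v → v ≤ m' → P v → P u) :
    ∀ v, m + 1 ≤ v → v ≤ m' →
      (P v ↔ v ≤ m + ((Finset.Icc (m + 1) m').filter (fun u => P u)).card) := by
  intro v hv1 hv2
  set N := (Finset.Icc (m + 1) m').filter (fun u => P u) with hN
  constructor
  · intro hPv
    have hsub : Finset.Icc (m + 1) v ⊆ N := by
      intro u hu
      rw [Finset.mem_Icc] at hu
      rw [hN, Finset.mem_filter, Finset.mem_Icc]
      exact ⟨⟨hu.1, by omega⟩, hdc u v hu.1 hu.2 hv2 hPv⟩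
    have := Finset.card_le_card hsub
    rw [Nat.card_Icc] at this
    omega
  · intro hle
    by_contra hPv
    have hsub : N ⊆ Finset.Icc (m + 1) (v - 1) := by
      intro u hu
      rw [hN, Finset.mem_filter, Finset.mem_Icc] at hu
      rw [Finset.mem_Icc]
      refine ⟨hu.1.1, ?_⟩
      by_contra hc
      exact hPv (hdc v u hv1 (by omega) hu.1.2 hu.2)
    have := Finset.card_le_card hsub
    rw [Nat.card_Icc] at this
    omega

lemma m_mono (t : ℕ) (m : ℕ → ℕ) (hmono : ∀ s, 1 ≤ s → s ≤ t → m s < m (s + 1)) :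
    ∀ j k, 1 ≤ j → j ≤ k → k ≤ t + 1 → m j ≤ m k := by
  intro j k hj hjk hk
  induction k, hjk using Nat.le_induction with
  | base => exact le_refl _
  | succ k hk' ih =>
      have : m k < m (k + 1) := hmono k (by omega) (by omega)
      have := ih (by omega)
      omega

lemma m_strict (t : ℕ) (m : ℕ → ℕ) (hmono : ∀ s, 1 ≤ s → s ≤ t → m s < m (s + 1)) :
    ∀ j k, 1 ≤ j → j < k → k ≤ t + 1 → m j < m k := by
  intro j k hj hjk hk
  have h1 : m j < m (j + 1) := hmono j hj (by omega)
  have h2 : m (j + 1) ≤ m k := m_mono t m hmono (j + 1) k (by omega) (by omega) hk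
  omega

lemma telescope_aux (t : ℕ) (g : ℕ → ℕ) (hg : ∀ i, i < t → g i ≤ g (i + 1)) :
    g 0 ≤ g t ∧ ∑ i ∈ Finset.range t, (g (i + 1) - g i) = g t - g 0 := by
  induction t with
  | zero => simp
  | succ t ih =>
      obtain ⟨h1, h2⟩ := ih (fun i hi => hg i (by omega))
      have h3 := hg t (by omega)
      rw [Finset.sum_range_succ, h2]
      omega

lemma isSigned_inv {n : ℕ} {σ : Equiv.Perm ℤ} (h : IsSigned n σ) : IsSigned n σ⁻¹ := by
  constructor
  · intro a
    apply σ.injective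
    rw [perm_apply_inv_self, h.1, perm_apply_inv_self]
  · intro a ha
    have h2 := h.2 a ha
    conv_lhs => rw [← h2]
    exact perm_inv_apply_self σ a

lemma mem_word_iff {n : ℕ} {σ : Equiv.Perm ℤ} (x : ℤ) :
    x ∈ (List.range n).map (bword n σ) ↔ 1 ≤ σ⁻¹ x ∧ σ⁻¹ x ≤ n := by
  simp only [List.mem_map, List.mem_range, bword]
  constructor
  · rintro ⟨j, hj, rfl⟩
    rw [perm_inv_apply_self]
    omega
  · rintro ⟨h1, h2⟩
    refine ⟨(σ⁻¹ x - 1).toNat, by omega, ?_⟩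
    have he : ((σ⁻¹ x - 1).toNat : ℤ) + 1 = σ⁻¹ x := by omega
    rw [he, perm_apply_inv_self]

lemma pair_word {n : ℕ} {σ : Equiv.Perm ℤ} {a b : ℤ}
    (hs : List.Sublist [a, b] ((List.range n).map (bword n σ))) :
    σ⁻¹ a < σ⁻¹ b := by
  obtain ⟨p, q, hpq, hq, hpa, hqb⟩ := pair_sublist hs
  rw [List.length_map, List.length_range] at hq
  have hp : p < n := lt_trans hpq hq
  have h1 : σ⁻¹ a = (p : ℤ) + 1 := by
    rw [List.getElem?_map, List.getElem?_range hp] at hpa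
    simp only [Option.map_some, Option.some_inj] at hpa
    rw [← hpa, bword, perm_inv_apply_self]
  have h2 : σ⁻¹ b = (q : ℤ) + 1 := by
    rw [List.getElem?_map, List.getElem?_range hq] at hqb
    simp only [Option.map_some, Option.some_inj] at hqb
    rw [← hqb, bword, perm_inv_apply_self]
  rw [h1, h2]
  omega

lemma sublist_word {n : ℕ} {σ : Equiv.Perm ℤ} (l : List ℤ)
    (hpos : ∀ j, j < l.length → 1 ≤ σ⁻¹ (l.getD j 0) ∧ σ⁻¹ (l.getD j 0) ≤ n)
    (hmono : ∀ j k, j < k → k < l.length → σ⁻¹ (l.getD j 0) < σ⁻¹ (l.getD k 0)) :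
    List.Sublist l ((List.range n).map (bword n σ)) := by
  apply sublist_map_range (bword n σ) n l (fun j => (σ⁻¹ (l.getD j 0)).toNat - 1)
  · intro j k hjk hk
    have h1 := hpos j (lt_trans hjk hk)
    have h2 := hpos k hk
    have h3 := hmono j k hjk hk
    omega
  · intro j hj
    have := hpos j hj
    omega
  · intro j hj
    have h1 := hpos j hj
    have hg : l.get ⟨j, hj⟩ = l.getD j 0 := by
      rw [List.getD_eq_getElem?_getD, List.getElem?_eq_getElem hj]
      rfl
    rw [hg, bword]
    have he : ((((σ⁻¹ (l.getD j 0)).toNat - 1 : ℕ)) : ℤ) + 1 = σ⁻¹ (l.getD j 0) := by omega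
    rw [he, perm_apply_inv_self]

/-- Lists of the shuffle decomposition. -/
def sLists (t : ℕ) (m : ℕ → ℕ) (r : Fin t → ℕ) : List (List ℤ) :=
  ((List.range' 1 (m 1)).map (fun k => (k : ℤ))) ::
    (List.ofFn fun s : Fin t =>
      [(List.range (r s - m ((s : ℕ) + 1))).map (fun k => -(r s : ℤ) + k),
       (List.range (m ((s : ℕ) + 2) - r s)).map (fun k => (r s : ℤ) + 1 + k)]).flatten

lemma alist_eq (m1 : ℕ) :
    (List.range' 1 m1).map (fun k : ℕ => (k : ℤ)) =
      (List.range m1).map (fun k : ℕ => (1 : ℤ) + k) := by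
  rw [List.range'_eq_map_range, List.map_map]
  apply List.map_congr_left
  intro k _
  simp only [Function.comp_apply]
  push_cast
  ring

lemma mem_sLists {t : ℕ} {m : ℕ → ℕ} {r : Fin t → ℕ} {l : List ℤ} :
    l ∈ sLists t m r ↔ l = (List.range' 1 (m 1)).map (fun k => (k : ℤ)) ∨
      ∃ s : Fin t,
        l = (List.range (r s - m ((s : ℕ) + 1))).map (fun k => -(r s : ℤ) + k) ∨
        l = (List.range (m ((s : ℕ) + 2) - r s)).map (fun k => (r s : ℤ) + 1 + k) := by
  simp only [sLists, List.mem_cons, List.mem_flatten, List.mem_ofFn, Set.mem_range]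
  constructor
  · rintro (rfl | ⟨a, ⟨s, rfl⟩, hl⟩)
    · exact Or.inl rfl
    · simp only [List.mem_cons, List.mem_singleton, List.not_mem_nil, or_false] at hl
      exact Or.inr ⟨s, hl⟩
  · rintro (rfl | ⟨s, hl⟩)
    · exact Or.inl rfl
    · exact Or.inr ⟨_, ⟨s, rfl⟩, by rcases hl with rfl | rfl <;> simp⟩

lemma length_sLists (t : ℕ) (m : ℕ → ℕ) (r : Fin t → ℕ) :
    (((sLists t m r).map List.length).sum : ℕ) =
      m 1 + ∑ s : Fin t, ((r s - m ((s : ℕ) + 1)) + (m ((s : ℕ) + 2) - r s)) := by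
  rw [sLists]
  simp [List.map_flatten, List.sum_flatten, List.map_ofFn, List.sum_ofFn, Function.comp_def,
    List.map_const', List.sum_replicate, smul_eq_mul]

lemma coe_map (l : List ℕ) (f : ℤ → ℤ) :
    List.map f (do let a ← l; pure ((a : ℤ))) = l.map (fun k : ℕ => f (k : ℤ)) := by
  simp
  induction l with
  | nil => rfl
  | cons x xs ih => simp_all

lemma getD_prog {L : ℕ} {c : ℤ} {j : ℕ} (hj : j < L) :
    ((List.range L).map (fun k : ℕ => c + (k : ℤ))).getD j 0 = c + j := by
  rw [List.getD_eq_getElem?_getD, List.getElem?_map, List.getElem?_range hj]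
  rfl

lemma union_sLists (t : ℕ) (m : ℕ → ℕ) (r : Fin t → ℕ)
    (hb : ∀ s : Fin t, m ((s : ℕ) + 1) ≤ r s ∧ r s ≤ m ((s : ℕ) + 2)) (x : ℤ) :
    (∃ l ∈ sLists t m r, x ∈ l) ↔
      (1 ≤ x ∧ x ≤ (m 1 : ℤ)) ∨ ∃ s : Fin t,
        ((m ((s : ℕ) + 1) : ℤ) < -x ∧ -x ≤ (r s : ℤ)) ∨
        ((r s : ℤ) < x ∧ x ≤ (m ((s : ℕ) + 2) : ℤ)) := by
  have hA : ∀ y : ℤ, y ∈ (List.range' 1 (m 1)).map (fun k => (k : ℤ)) ↔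
      1 ≤ y ∧ y ≤ (m 1 : ℤ) := by
    intro y
    rw [coe_map]
    show y ∈ (List.range' 1 (m 1)).map (fun k : ℕ => (k : ℤ)) ↔ _
    rw [alist_eq, mem_prog]
    omega
  have hB : ∀ (s : Fin t) (y : ℤ),
      y ∈ (List.range (r s - m ((s : ℕ) + 1))).map (fun k => -(r s : ℤ) + k) ↔
        ((m ((s : ℕ) + 1) : ℤ) < -y ∧ -y ≤ (r s : ℤ)) := by
    intro s y
    rw [coe_map, mem_prog]
    have := (hb s).1
    omega
  have hC : ∀ (s : Fin t) (y : ℤ),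
      y ∈ (List.range (m ((s : ℕ) + 2) - r s)).map (fun k => (r s : ℤ) + 1 + k) ↔
        ((r s : ℤ) < y ∧ y ≤ (m ((s : ℕ) + 2) : ℤ)) := by
    intro s y
    rw [coe_map, mem_prog]
    have := (hb s).2
    omega
  constructor
  · rintro ⟨l, hl, hx⟩
    rw [mem_sLists] at hl
    rcases hl with rfl | ⟨s, rfl | rfl⟩
    · exact Or.inl ((hA x).mp hx)
    · exact Or.inr ⟨s, Or.inl ((hB s x).mp hx)⟩
    · exact Or.inr ⟨s, Or.inr ((hC s x).mp hx)⟩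
  · rintro (hx | ⟨s, hx | hx⟩)
    · exact ⟨_, mem_sLists.mpr (Or.inl rfl), (hA x).mpr hx⟩
    · exact ⟨_, mem_sLists.mpr (Or.inr ⟨s, Or.inl rfl⟩), (hB s x).mpr hx⟩
    · exact ⟨_, mem_sLists.mpr (Or.inr ⟨s, Or.inr rfl⟩), (hC s x).mpr hx⟩

lemma r_le_of (t : ℕ) (m : ℕ → ℕ)
    (hmm : ∀ j k, 1 ≤ j → j ≤ k → k ≤ t + 1 → m j ≤ m k)
    (r₁ r₂ : Fin t → ℕ)
    (hb1 : ∀ s : Fin t, m ((s : ℕ) + 1) ≤ r₁ s ∧ r₁ s ≤ m ((s : ℕ) + 2))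
    (hb2 : ∀ s : Fin t, m ((s : ℕ) + 1) ≤ r₂ s ∧ r₂ s ≤ m ((s : ℕ) + 2))
    (hUU : ∀ x : ℤ,
      ((1 ≤ x ∧ x ≤ (m 1 : ℤ)) ∨ ∃ s : Fin t,
        ((m ((s : ℕ) + 1) : ℤ) < -x ∧ -x ≤ (r₁ s : ℤ)) ∨
        ((r₁ s : ℤ) < x ∧ x ≤ (m ((s : ℕ) + 2) : ℤ))) →
      ((1 ≤ x ∧ x ≤ (m 1 : ℤ)) ∨ ∃ s : Fin t,
        ((m ((s : ℕ) + 1) : ℤ) < -x ∧ -x ≤ (r₂ s : ℤ)) ∨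
        ((r₂ s : ℤ) < x ∧ x ≤ (m ((s : ℕ) + 2) : ℤ)))) :
    ∀ s : Fin t, r₁ s ≤ r₂ s := by
  intro s
  by_contra hc
  push_neg at hc
  have hss := s.2
  have hk1 : m ((s : ℕ) + 1) < r₁ s := by have := hb2 s; omega
  have hx := hUU (-(r₁ s : ℤ))
    (Or.inr ⟨s, Or.inl ⟨by push_cast; omega, by push_cast; omega⟩⟩)
  rcases hx with ⟨h1, h2⟩ | ⟨s', hB | hC⟩
  · omega
  · obtain ⟨hB1, hB2⟩ := hB
    rw [neg_neg] at hB1 hB2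
    by_cases hss' : (s' : ℕ) = (s : ℕ)
    · have heq : s' = s := Fin.ext hss'
      rw [heq] at hB2
      omega
    · have hs2' := s'.2
      rcases lt_or_gt_of_ne hss' with hlt | hgt
      · have h5 := hmm ((s' : ℕ) + 2) ((s : ℕ) + 1) (by omega) (by omega) (by omega)
        have h6 := (hb2 s').2
        omega
      · have h5 := hmm ((s : ℕ) + 2) ((s' : ℕ) + 1) (by omega) (by omega) (by omega)
        have h6 := (hb1 s).2
        omega
  · obtain ⟨hC1, hC2⟩ := hC
    omega

end Stmt9Aux

theorem stmt9 (n t : ℕ) (m : ℕ → ℕ) (h0 : m 0 = 0) (hlast : m (t + 1) = n)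
    (hmono : ∀ s, 1 ≤ s → s ≤ t → m s < m (s + 1))
    (σ : Equiv.Perm ℤ) (h : IsSigned n σ) :
    DesB n σ⁻¹ ⊆ (Finset.Icc 1 t).image m ↔
      ∃! r : Fin t → ℕ,
        (∀ s : Fin t, m ((s : ℕ) + 1) ≤ r s ∧ r s ≤ m ((s : ℕ) + 2)) ∧
        IsShuffle ((List.range n).map (bword n σ))
          (((List.range' 1 (m 1)).map (fun k => (k : ℤ))) ::
            (List.ofFn fun s : Fin t =>
              [(List.range (r s - m ((s : ℕ) + 1))).map (fun k => -(r s : ℤ) + k),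
               (List.range (m ((s : ℕ) + 2) - r s)).map (fun k => (r s : ℤ) + 1 + k)]).flatten) := by
  classical
  have hinv := Stmt9Aux.isSigned_inv h
  have hmm := Stmt9Aux.m_mono t m hmono
  have hms := Stmt9Aux.m_strict t m hmono
  have hm1n : m 1 ≤ n := by
    have h1 := hmm 1 (t + 1) le_rfl (by omega) le_rfl
    rw [hlast] at h1
    exact h1
  have hmsn : ∀ j, j ≤ t + 1 → m j ≤ n := by
    intro j hj
    rcases Nat.eq_zero_or_pos j with rfl | hj1
    · rw [h0]; omega
    · have h1 := hmm j (t + 1) hj1 hj le_rfl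
      rw [hlast] at h1
      exact h1
  have hinvneg : ∀ a : ℤ, σ⁻¹ (-a) = -σ⁻¹ a := hinv.1
  have hinv0 : σ⁻¹ (0 : ℤ) = 0 := hinv.map_zero
  set M := (Finset.Icc 1 t).image m with hMdef
  have hMiff : ∀ i : ℕ, i ∈ M ↔ ∃ j, 1 ≤ j ∧ j ≤ t ∧ m j = i := by
    intro i
    rw [hMdef, Finset.mem_image]
    constructor
    · rintro ⟨j, hj, rfl⟩
      rw [Finset.mem_Icc] at hj
      exact ⟨j, hj.1, hj.2, rfl⟩
    · rintro ⟨j, h1, h2, rfl⟩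
      exact ⟨j, Finset.mem_Icc.mpr ⟨h1, h2⟩, rfl⟩
  have hnotM : ∀ s i, s ≤ t → m s < i → i < m (s + 1) → i ∉ M := by
    intro s i hst h1 h2 hiM
    obtain ⟨j, hj1, hj2, hji⟩ := (hMiff i).mp hiM
    rcases le_or_gt j s with hjs | hjs
    · rcases Nat.eq_zero_or_pos s with rfl | hs
      · omega
      · have := hmm j s hj1 hjs (by omega); omega
    · have := hmm (s + 1) j (by omega) hjs (by omega); omega
  have hfind : ∀ i, 1 ≤ i → i < n → i ∉ M → ∃ s, s ≤ t ∧ m s < i ∧ i < m (s + 1) := by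
    intro i h1 h2 hiM
    have hne : ((Finset.range (t + 1)).filter (fun s => m s < i)).Nonempty := by
      refine ⟨0, Finset.mem_filter.mpr ⟨Finset.mem_range.mpr (by omega), ?_⟩⟩
      rw [h0]; omega
    set s := ((Finset.range (t + 1)).filter (fun s => m s < i)).max' hne with hsdef
    have hsF := Finset.max'_mem _ hne
    rw [← hsdef] at hsF
    rw [Finset.mem_filter, Finset.mem_range] at hsF
    refine ⟨s, by omega, hsF.2, ?_⟩
    rcases eq_or_lt_of_le (show s ≤ t by omega) with heq | hst
    · rw [heq, hlast]; exact h2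
    · by_contra hc
      push_neg at hc
      have hne2 : m (s + 1) ≠ i := by
        intro he
        exact hiM ((hMiff i).mpr ⟨s + 1, by omega, by omega, he⟩)
      have hmem : s + 1 ∈ (Finset.range (t + 1)).filter (fun s => m s < i) := by
        rw [Finset.mem_filter, Finset.mem_range]
        exact ⟨by omega, by omega⟩
      have := Finset.le_max' _ _ hmem
      omega
  have hfind2 : ∀ v : ℕ, m 1 < v → v ≤ n → ∃ s, 1 ≤ s ∧ s ≤ t ∧ m s < v ∧ v ≤ m (s + 1) := by
    intro v h1 h2
    have ht1 : 1 ≤ t := by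
      by_contra hc
      have : t = 0 := by omega
      subst this
      have : m 1 = n := hlast
      omega
    have hne : ((Finset.Icc 1 t).filter (fun s => m s < v)).Nonempty := by
      refine ⟨1, Finset.mem_filter.mpr ⟨Finset.mem_Icc.mpr ⟨le_rfl, ht1⟩, h1⟩⟩
    set s := ((Finset.Icc 1 t).filter (fun s => m s < v)).max' hne with hsdef
    have hsF := Finset.max'_mem _ hne
    rw [← hsdef] at hsF
    rw [Finset.mem_filter, Finset.mem_Icc] at hsF
    refine ⟨s, hsF.1.1, hsF.1.2, hsF.2, ?_⟩
    rcases eq_or_lt_of_le hsF.1.2 with heq | hst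
    · rw [heq, hlast]; exact h2
    · by_contra hc
      push_neg at hc
      have hmem : s + 1 ∈ (Finset.Icc 1 t).filter (fun s => m s < v) := by
        rw [Finset.mem_filter, Finset.mem_Icc]
        exact ⟨⟨by omega, by omega⟩, by omega⟩
      have := Finset.le_max' _ _ hmem
      omega
  have hdes : ∀ i : ℕ, i ∈ DesB n σ⁻¹ ↔
      i < n ∧ σ⁻¹ ((i : ℤ) + 1) < (if i = 0 then 0 else σ⁻¹ (i : ℤ)) := by
    intro i
    rw [DesB, Finset.mem_filter, Finset.mem_range]
  constructor
  · -- forward direction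
    intro hsub
    have hnd : ∀ i : ℕ, 1 ≤ i → i < n → i ∉ M → σ⁻¹ (i : ℤ) < σ⁻¹ ((i : ℤ) + 1) := by
      intro i h1 h2 hiM
      have hd : i ∉ DesB n σ⁻¹ := fun hmem => hiM (hsub hmem)
      rw [hdes] at hd
      push_neg at hd
      have h3 := hd h2
      rw [if_neg (by omega)] at h3
      rcases lt_or_eq_of_le h3 with h4 | h4
      · exact h4
      · exfalso
        have := σ⁻¹.injective h4
        omega
    have h0d : (0 : ℕ) ∉ M → 0 < n → 0 < σ⁻¹ 1 := by
      intro hM0 hn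
      have hd : (0 : ℕ) ∉ DesB n σ⁻¹ := fun hmem => hM0 (hsub hmem)
      rw [hdes] at hd
      push_neg at hd
      have h3 := hd hn
      rw [if_pos rfl] at h3
      norm_num at h3
      rcases lt_or_eq_of_le h3 with h4 | h4
      · exact h4
      · exfalso
        have : σ⁻¹ (1 : ℤ) = σ⁻¹ 0 := by rw [hinv0]; exact h4.symm
        have := σ⁻¹.injective this
        omega
    have hblock : ∀ s, s ≤ t → ∀ u v : ℕ, m s + 1 ≤ u → u < v → v ≤ m (s + 1) →
        σ⁻¹ (u : ℤ) < σ⁻¹ (v : ℤ) := by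
      intro s hst
      apply Stmt9Aux.mono_consec (fun k : ℕ => σ⁻¹ (k : ℤ)) (m s + 1) (m (s + 1))
      intro k hk1 hk2
      have hkM : k ∉ M := hnotM s k hst (by omega) hk2
      have hkn : k < n := by
        have := hmsn (s + 1) (by omega)
        omega
      have hr := hnd k (by omega) hkn hkM
      have he : ((k + 1 : ℕ) : ℤ) = (k : ℤ) + 1 := by push_cast; ring
      show σ⁻¹ (k : ℤ) < σ⁻¹ ((k + 1 : ℕ) : ℤ)
      rw [he]
      exact hr
    have hpos0 : ∀ v : ℕ, 1 ≤ v → v ≤ m 1 → 0 < σ⁻¹ (v : ℤ) := by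
      intro v h1 h2
      have hm1 : 0 < m 1 := by omega
      have h0M : (0 : ℕ) ∉ M := by
        intro hc
        obtain ⟨j, hj1, hj2, hj0⟩ := (hMiff 0).mp hc
        have := hmm 1 j le_rfl hj1 (by omega)
        omega
      have hbase := h0d h0M (by omega)
      rcases eq_or_lt_of_le h1 with heq | hlt
      · rw [← heq]; exact_mod_cast hbase
      · have := hblock 0 (by omega) 1 v (by omega) hlt h2
        calc (0 : ℤ) < σ⁻¹ 1 := hbase
          _ = σ⁻¹ ((1 : ℕ) : ℤ) := by norm_num
          _ < σ⁻¹ (v : ℤ) := this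
    set rr : Fin t → ℕ := fun s =>
      m ((s : ℕ) + 1) +
        ((Finset.Icc (m ((s : ℕ) + 1) + 1) (m ((s : ℕ) + 2))).filter
          (fun u : ℕ => σ⁻¹ (u : ℤ) < 0)).card with hrrdef
    have hbounds : ∀ s : Fin t, m ((s : ℕ) + 1) ≤ rr s ∧ rr s ≤ m ((s : ℕ) + 2) := by
      intro s
      have hc := Finset.card_filter_le (Finset.Icc (m ((s : ℕ) + 1) + 1) (m ((s : ℕ) + 2)))
        (fun u => σ⁻¹ (u : ℤ) < 0)
      rw [Nat.card_Icc] at hc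
      have hle : m ((s : ℕ) + 1) < m ((s : ℕ) + 2) :=
        hmono ((s : ℕ) + 1) (by omega) (by have := s.2; omega)
      simp only [hrrdef]
      omega
    have hneg : ∀ s : Fin t, ∀ v, m ((s : ℕ) + 1) + 1 ≤ v → v ≤ m ((s : ℕ) + 2) →
        (σ⁻¹ (v : ℤ) < 0 ↔ v ≤ rr s) := by
      intro s
      have hdc : ∀ u v, m ((s : ℕ) + 1) + 1 ≤ u → u ≤ v → v ≤ m ((s : ℕ) + 2) →
          σ⁻¹ (v : ℤ) < 0 → σ⁻¹ (u : ℤ) < 0 := by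
        intro u v hu huv hv hPv
        rcases eq_or_lt_of_le huv with rfl | hlt
        · exact hPv
        · have h5 := hblock ((s : ℕ) + 1) (by have := s.2; omega) u v hu hlt hv
          omega
      intro v hv1 hv2
      simp only [hrrdef]
      exact Stmt9Aux.initial_seg _ _ (fun u => σ⁻¹ (u : ℤ) < 0) hdc v hv1 hv2
    have hchar : ∀ x : ℤ, (1 ≤ σ⁻¹ x ∧ σ⁻¹ x ≤ (n : ℤ)) ↔
        ((1 ≤ x ∧ x ≤ (m 1 : ℤ)) ∨ ∃ s : Fin t,
          ((m ((s : ℕ) + 1) : ℤ) < -x ∧ -x ≤ (rr s : ℤ)) ∨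
          ((rr s : ℤ) < x ∧ x ≤ (m ((s : ℕ) + 2) : ℤ))) := by
      intro x
      constructor
      · rintro ⟨hx1, hx2⟩
        have hxabs : |x| ≤ (n : ℤ) := by
          by_contra hc
          push_neg at hc
          have hfix := hinv.2 x hc
          rw [hfix] at hx1 hx2
          rw [abs_of_pos (by omega)] at hc
          omega
        have habs := abs_le.mp hxabs
        have hx0 : x ≠ 0 := by
          intro h0x
          rw [h0x, hinv0] at hx1
          omega
        rcases lt_or_gt_of_ne hx0 with hxneg | hxpos
        · set v := (-x).toNat with hvdef
          have hvx : (v : ℤ) = -x := by omega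
          have hv1 : 1 ≤ v ∧ v ≤ n := by omega
          have hsv : σ⁻¹ (v : ℤ) < 0 := by
            rw [hvx, hinvneg]
            omega
          have hvm1 : m 1 < v := by
            by_contra hc
            push_neg at hc
            have := hpos0 v hv1.1 hc
            omega
          obtain ⟨s, hs1, hs2, hs3, hs4⟩ := hfind2 v hvm1 hv1.2
          have hst : s - 1 < t := by omega
          refine Or.inr ⟨⟨s - 1, hst⟩, Or.inl ?_⟩
          have em1 : m (((⟨s - 1, hst⟩ : Fin t) : ℕ) + 1) = m s := by
            congr 1
            simp only [Fin.val_mk]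
            omega
          have em2 : m (((⟨s - 1, hst⟩ : Fin t) : ℕ) + 2) = m (s + 1) := by
            congr 1
            simp only [Fin.val_mk]
            omega
          have hrs : v ≤ rr ⟨s - 1, hst⟩ :=
            (hneg ⟨s - 1, hst⟩ v (by omega) (by omega)).mp hsv
          exact ⟨by omega, by omega⟩
        · set v := x.toNat with hvdef
          have hvx : (v : ℤ) = x := by omega
          have hv1 : 1 ≤ v ∧ v ≤ n := by omega
          rcases le_or_gt v (m 1) with hvm | hvm
          · exact Or.inl ⟨by omega, by omega⟩
          · obtain ⟨s, hs1, hs2, hs3, hs4⟩ := hfind2 v hvm hv1.2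
            have hst : s - 1 < t := by omega
            refine Or.inr ⟨⟨s - 1, hst⟩, Or.inr ?_⟩
            have em1 : m (((⟨s - 1, hst⟩ : Fin t) : ℕ) + 1) = m s := by
              congr 1
              simp only [Fin.val_mk]
              omega
            have em2 : m (((⟨s - 1, hst⟩ : Fin t) : ℕ) + 2) = m (s + 1) := by
              congr 1
              simp only [Fin.val_mk]
              omega
            have hsv : ¬ σ⁻¹ (v : ℤ) < 0 := by
              rw [hvx]
              omega
            have hrs : ¬ (v ≤ rr ⟨s - 1, hst⟩) := fun hle =>
              hsv ((hneg ⟨s - 1, hst⟩ v (by omega) (by omega)).mpr hle)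
            exact ⟨by omega, by omega⟩
      · rintro (⟨ha1, ha2⟩ | ⟨s, ⟨hb1, hb2⟩ | ⟨hc1, hc2⟩⟩)
        · have hp := hpos0 x.toNat (by omega) (by omega)
          have hcast : ((x.toNat : ℕ) : ℤ) = x := by omega
          rw [hcast] at hp
          have habs := abs_le.mp (hinv.abs_apply_le (a := x)
            (by rw [abs_of_pos (by omega)]; omega))
          omega
        · have hmsn2 : m ((s : ℕ) + 2) ≤ n := hmsn ((s : ℕ) + 2) (by have := s.2; omega)
          have hb := hbounds s
          set v := (-x).toNat with hvdef
          have hvx : (v : ℤ) = -x := by omega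
          have hsv : σ⁻¹ (v : ℤ) < 0 :=
            (hneg s v (by omega) (by omega)).mpr (by omega)
          have hseq : σ⁻¹ x = -σ⁻¹ (v : ℤ) := by
            rw [hvx, hinvneg, neg_neg]
          have habs := abs_le.mp (hinv.abs_apply_le (a := x)
            (by rw [abs_of_neg (by omega)]; omega))
          omega
        · have hmsn2 : m ((s : ℕ) + 2) ≤ n := hmsn ((s : ℕ) + 2) (by have := s.2; omega)
          have hb := hbounds s
          set v := x.toNat with hvdef
          have hvx : (v : ℤ) = x := by omega
          have hsv : ¬ σ⁻¹ (v : ℤ) < 0 := fun hcon => by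
            have := (hneg s v (by omega) (by omega)).mp hcon
            omega
          have hnz : σ⁻¹ (v : ℤ) ≠ 0 := by
            intro h0v
            have hv0 : (v : ℤ) = 0 := by
              apply σ⁻¹.injective
              rw [h0v, hinv0]
            omega
          have hseq : σ⁻¹ x = σ⁻¹ (v : ℤ) := by rw [hvx]
          have habs := abs_le.mp (hinv.abs_apply_le (a := x)
            (by rw [abs_of_pos (by omega)]; omega))
          omega
    have hsubprog : ∀ (c : ℤ) (L : ℕ),
        (∀ j : ℕ, j < L → 1 ≤ σ⁻¹ (c + j) ∧ σ⁻¹ (c + j) ≤ (n : ℤ)) →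
        (∀ j k : ℕ, j < k → k < L → σ⁻¹ (c + j) < σ⁻¹ (c + k)) →
        List.Sublist ((List.range L).map (fun k : ℕ => c + (k : ℤ)))
          ((List.range n).map (bword n σ)) := by
      intro c L h1 h2
      apply Stmt9Aux.sublist_word
      · intro j hj
        rw [List.length_map, List.length_range] at hj
        rw [Stmt9Aux.getD_prog hj]
        exact h1 j hj
      · intro j k hjk hk
        rw [List.length_map, List.length_range] at hk
        rw [Stmt9Aux.getD_prog (lt_trans hjk hk), Stmt9Aux.getD_prog hk]
        exact h2 j k hjk hk
    refine ⟨rr, ⟨hbounds, ?_, ?_, ?_⟩, ?_⟩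
    · -- sublists
      intro l hl
      have hl' : l ∈ Stmt9Aux.sLists t m rr := hl
      rw [Stmt9Aux.mem_sLists] at hl'
      rcases hl' with rfl | ⟨s, rfl | rfl⟩
      · rw [Stmt9Aux.coe_map]
        show List.Sublist ((List.range' 1 (m 1)).map (fun k : ℕ => (k : ℤ))) _
        rw [Stmt9Aux.alist_eq]
        apply hsubprog
        · intro j hj
          have hp := hpos0 (j + 1) (by omega) (by omega)
          have hcast : (((j + 1 : ℕ)) : ℤ) = 1 + (j : ℤ) := by push_cast; ring
          rw [hcast] at hp
          have habs := abs_le.mp (hinv.abs_apply_le (a := 1 + (j : ℤ))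
            (by rw [abs_of_pos (by omega)]; omega))
          omega
        · intro j k hjk hk
          have hb := hblock 0 (by omega) (j + 1) (k + 1) (by omega) (by omega)
            (by show k + 1 ≤ m 1; omega)
          have c1 : ((j + 1 : ℕ) : ℤ) = 1 + j := by push_cast; ring
          have c2 : ((k + 1 : ℕ) : ℤ) = 1 + k := by push_cast; ring
          rw [c1, c2] at hb
          exact hb
      · rw [Stmt9Aux.coe_map]
        have hb := hbounds s
        have hmsn2 : m ((s : ℕ) + 2) ≤ n := hmsn ((s : ℕ) + 2) (by have := s.2; omega)
        apply hsubprog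
        · intro j hj
          have he : -(rr s : ℤ) + j = -(((rr s - j : ℕ)) : ℤ) := by omega
          have hsv : σ⁻¹ ((rr s - j : ℕ) : ℤ) < 0 :=
            (hneg s (rr s - j) (by omega) (by omega)).mpr (by omega)
          rw [he, hinvneg]
          have habs := abs_le.mp (hinv.abs_apply_le (a := ((rr s - j : ℕ) : ℤ))
            (by rw [abs_of_pos (by omega)]; omega))
          omega
        · intro j k hjk hk
          have hvj : -(rr s : ℤ) + j = -(((rr s - j : ℕ)) : ℤ) := by omega
          have hvk : -(rr s : ℤ) + k = -(((rr s - k : ℕ)) : ℤ) := by omega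
          rw [hvj, hvk, hinvneg, hinvneg]
          have hbl := hblock ((s : ℕ) + 1) (by have := s.2; omega) (rr s - k) (rr s - j)
            (by omega) (by omega) (by show rr s - j ≤ m ((s : ℕ) + 2); omega)
          omega
      · rw [Stmt9Aux.coe_map]
        have hb := hbounds s
        have hmsn2 : m ((s : ℕ) + 2) ≤ n := hmsn ((s : ℕ) + 2) (by have := s.2; omega)
        apply hsubprog
        · intro j hj
          have he : (rr s : ℤ) + 1 + j = ((rr s + 1 + j : ℕ) : ℤ) := by push_cast; ring
          rw [he]
          have hsv : ¬ σ⁻¹ ((rr s + 1 + j : ℕ) : ℤ) < 0 := fun hcon => by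
            have := (hneg s (rr s + 1 + j) (by omega) (by omega)).mp hcon
            omega
          have hnz : σ⁻¹ ((rr s + 1 + j : ℕ) : ℤ) ≠ 0 := by
            intro h0v
            have hv0 : ((rr s + 1 + j : ℕ) : ℤ) = 0 := by
              apply σ⁻¹.injective
              rw [h0v, hinv0]
            omega
          have habs := abs_le.mp (hinv.abs_apply_le (a := ((rr s + 1 + j : ℕ) : ℤ))
            (by rw [abs_of_pos (by omega)]; omega))
          omega
        · intro j k hjk hk
          have he1 : (rr s : ℤ) + 1 + j = ((rr s + 1 + j : ℕ) : ℤ) := by push_cast; ring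
          have he2 : (rr s : ℤ) + 1 + k = ((rr s + 1 + k : ℕ) : ℤ) := by push_cast; ring
          rw [he1, he2]
          exact hblock ((s : ℕ) + 1) (by have := s.2; omega) (rr s + 1 + j) (rr s + 1 + k)
            (by omega) (by omega) (by show rr s + 1 + k ≤ m ((s : ℕ) + 2); omega)
    · -- membership
      intro x
      exact (Stmt9Aux.mem_word_iff x).trans
        ((hchar x).trans (Stmt9Aux.union_sLists t m rr hbounds x).symm)
    · -- lengths
      have hsum : ((Stmt9Aux.sLists t m rr).map List.length).sum = n := by
        rw [Stmt9Aux.length_sLists]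
        have hcong : ∀ s : Fin t,
            (rr s - m ((s : ℕ) + 1)) + (m ((s : ℕ) + 2) - rr s)
              = m ((s : ℕ) + 1 + 1) - m ((s : ℕ) + 1) := by
          intro s
          have hb := hbounds s
          have he : (s : ℕ) + 1 + 1 = (s : ℕ) + 2 := by omega
          rw [he]
          omega
        rw [Finset.sum_congr rfl (fun s _ => hcong s)]
        rw [Fin.sum_univ_eq_sum_range (fun i => m (i + 1 + 1) - m (i + 1)) t]
        have htel := Stmt9Aux.telescope_aux t (fun i => m (i + 1))
          (fun i hi => le_of_lt (hmono (i + 1) (by omega) (by omega)))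
        have htel2 : ∑ i ∈ Finset.range t, (m (i + 1 + 1) - m (i + 1)) = m (t + 1) - m 1 :=
          htel.2
        rw [htel2, hlast]
        omega
      calc ((List.range n).map (bword n σ)).length = n := by simp
        _ = ((Stmt9Aux.sLists t m rr).map List.length).sum := hsum.symm
    · -- uniqueness
      intro r' hr'
      obtain ⟨hr'b, hr'shuf⟩ := hr'
      have hU' : ∀ x : ℤ,
          ((1 ≤ x ∧ x ≤ (m 1 : ℤ)) ∨ ∃ s : Fin t,
            ((m ((s : ℕ) + 1) : ℤ) < -x ∧ -x ≤ (r' s : ℤ)) ∨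
            ((r' s : ℤ) < x ∧ x ≤ (m ((s : ℕ) + 2) : ℤ))) ↔
          ((1 ≤ x ∧ x ≤ (m 1 : ℤ)) ∨ ∃ s : Fin t,
            ((m ((s : ℕ) + 1) : ℤ) < -x ∧ -x ≤ (rr s : ℤ)) ∨
            ((rr s : ℤ) < x ∧ x ≤ (m ((s : ℕ) + 2) : ℤ))) := by
        intro x
        calc ((1 ≤ x ∧ x ≤ (m 1 : ℤ)) ∨ ∃ s : Fin t,
            ((m ((s : ℕ) + 1) : ℤ) < -x ∧ -x ≤ (r' s : ℤ)) ∨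
            ((r' s : ℤ) < x ∧ x ≤ (m ((s : ℕ) + 2) : ℤ)))
            ↔ x ∈ (List.range n).map (bword n σ) :=
              ((hr'shuf.2.1 x).trans (Stmt9Aux.union_sLists t m r' hr'b x)).symm
          _ ↔ (1 ≤ σ⁻¹ x ∧ σ⁻¹ x ≤ (n : ℤ)) := Stmt9Aux.mem_word_iff x
          _ ↔ _ := hchar x
      have hle1 := Stmt9Aux.r_le_of t m hmm r' rr hr'b hbounds (fun x => (hU' x).mp)
      have hle2 := Stmt9Aux.r_le_of t m hmm rr r' hbounds hr'b (fun x => (hU' x).mpr)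
      funext s
      exact le_antisymm (hle1 s) (hle2 s)
  · -- backward direction
    rintro ⟨r, ⟨hrb, hshuf⟩, -⟩
    have hmemS : ∀ x : ℤ, x ∈ (List.range n).map (bword n σ) ↔
        ((1 ≤ x ∧ x ≤ (m 1 : ℤ)) ∨ ∃ s : Fin t,
          ((m ((s : ℕ) + 1) : ℤ) < -x ∧ -x ≤ (r s : ℤ)) ∨
          ((r s : ℤ) < x ∧ x ≤ (m ((s : ℕ) + 2) : ℤ))) :=
      fun x => (hshuf.2.1 x).trans (Stmt9Aux.union_sLists t m r hrb x)
    have hsubl : ∀ l ∈ Stmt9Aux.sLists t m r,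
        List.Sublist l ((List.range n).map (bword n σ)) := hshuf.1
    intro i hi
    rw [hdes] at hi
    obtain ⟨hin, hlt⟩ := hi
    by_contra hiM
    rcases Nat.eq_zero_or_pos i with rfl | hi1
    · rw [if_pos rfl] at hlt
      norm_num at hlt
      have hm1 : 1 ≤ m 1 := by
        by_contra hc
        have hm10 : m 1 = 0 := by omega
        have ht1 : 1 ≤ t := by
          by_contra hc2
          have ht0 : t = 0 := by omega
          have hmn : m 1 = n := by
            rw [← hlast]
            congr 1
            omega
          omega
        exact hiM ((hMiff 0).mpr ⟨1, le_rfl, ht1, hm10⟩)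
      have h1S : (1 : ℤ) ∈ (List.range n).map (bword n σ) :=
        (hmemS 1).mpr (Or.inl ⟨le_rfl, by omega⟩)
      have := (Stmt9Aux.mem_word_iff (1 : ℤ)).mp h1S
      change σ⁻¹ 1 < 0 at hlt; omega
    · rw [if_neg (by omega)] at hlt
      obtain ⟨s, hst, hms1, hms2⟩ := hfind i hi1 hin hiM
      rcases Nat.eq_zero_or_pos s with rfl | hs1
      · rw [h0] at hms1
        have hms2' : i < m 1 := hms2
        have hpair : List.Sublist [(i : ℤ), (i : ℤ) + 1]
            ((List.range (m 1)).map (fun k : ℕ => (1 : ℤ) + (k : ℤ))) :=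
          Stmt9Aux.pair_prog (by omega) (by omega)
        have hA := hsubl _ (Stmt9Aux.mem_sLists.mpr (Or.inl rfl))
        rw [Stmt9Aux.coe_map] at hA
        have hA' : List.Sublist ((List.range' 1 (m 1)).map (fun k : ℕ => (k : ℤ)))
            ((List.range n).map (bword n σ)) := hA
        rw [Stmt9Aux.alist_eq] at hA'
        have hpw := Stmt9Aux.pair_word (hpair.trans hA')
        omega
      · have hst2 : s - 1 < t := by omega
        set s' : Fin t := ⟨s - 1, hst2⟩ with hs'def
        have em1 : m ((s' : ℕ) + 1) = m s := by
          congr 1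
          simp only [hs'def, Fin.val_mk]
          omega
        have em2 : m ((s' : ℕ) + 2) = m (s + 1) := by
          congr 1
          simp only [hs'def, Fin.val_mk]
          omega
        have hbs := hrb s'
        have hBsub := hsubl _ (Stmt9Aux.mem_sLists.mpr (Or.inr ⟨s', Or.inl rfl⟩))
        have hCsub := hsubl _ (Stmt9Aux.mem_sLists.mpr (Or.inr ⟨s', Or.inr rfl⟩))
        rw [Stmt9Aux.coe_map] at hBsub hCsub
        rcases lt_trichotomy i (r s') with hcmp | hcmp | hcmp
        · have hpair : List.Sublist [-((i : ℤ) + 1), -((i : ℤ) + 1) + 1]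
              ((List.range (r s' - m ((s' : ℕ) + 1))).map
                (fun k : ℕ => -(r s' : ℤ) + (k : ℤ))) :=
            Stmt9Aux.pair_prog (by omega) (by omega)
          have hpw := Stmt9Aux.pair_word (hpair.trans hBsub)
          have hx2 : -((i : ℤ) + 1) + 1 = -(i : ℤ) := by ring
          rw [hx2, hinvneg, hinvneg] at hpw
          omega
        · have hmem1 : -(i : ℤ) ∈ (List.range n).map (bword n σ) :=
            (hmemS _).mpr (Or.inr ⟨s', Or.inl ⟨by omega, by omega⟩⟩)
          have h1 := (Stmt9Aux.mem_word_iff _).mp hmem1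
          rw [hinvneg] at h1
          have hmem2 : (i : ℤ) + 1 ∈ (List.range n).map (bword n σ) := by
            have hcast : (i : ℤ) + 1 = ((i + 1 : ℕ) : ℤ) := by push_cast; ring
            rw [hcast]
            exact (hmemS _).mpr (Or.inr ⟨s', Or.inr ⟨by omega, by omega⟩⟩)
          have h2 := (Stmt9Aux.mem_word_iff _).mp hmem2
          omega
        · have hpair : List.Sublist [(i : ℤ), (i : ℤ) + 1]
              ((List.range (m ((s' : ℕ) + 2) - r s')).map
                (fun k : ℕ => ((r s' : ℤ) + 1) + (k : ℤ))) :=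
            Stmt9Aux.pair_prog (by omega) (by omega)
          have hpw := Stmt9Aux.pair_word (hpair.trans hCsub)
          omega



end Statements
end

section
/- The q-binomial theorem: ∏_{i=1}^n (1 + q^i x) = ∑_{k=0}^n [n choose k]_q · q^{binom(k+1,2)} · x^k. -/
open Finset

noncomputable section Statements

open Finset RatFunc

local notation "𝕢" => (RatFunc.X : RatFunc ℚ)

lemma qInt_add {F : Type} [Field F] (q : F) (a b : ℕ) :
    qInt q (a + b) = qInt q a + q ^ a * qInt q b := by
  simp only [qInt, Finset.sum_range_add, pow_add, Finset.mul_sum]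

lemma qFact_succ {F : Type} [Field F] (q : F) (n : ℕ) :
    qFact q (n + 1) = qFact q n * qInt q (n + 1) := Finset.prod_range_succ _ _

lemma qFact_ne_zero {F : Type} [Field F] {q : F} (hq : ∀ m : ℕ, qInt q (m + 1) ≠ 0) (n : ℕ) :
    qFact q n ≠ 0 := Finset.prod_ne_zero_iff.mpr fun i _ => hq i

lemma gauss_pascal {F : Type} [Field F] {q : F} (hq : ∀ m : ℕ, qInt q (m + 1) ≠ 0) (a b : ℕ) :
    qFact q (a + b + 2) / (qFact q (a + 1) * qFact q (b + 1)) =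
      qFact q (a + b + 1) / (qFact q (a + 1) * qFact q b)
      + q ^ (b + 1) * (qFact q (a + b + 1) / (qFact q a * qFact q (b + 1))) := by
  have key : qInt q (a + b + 2) = qInt q (b + 1) + q ^ (b + 1) * qInt q (a + 1) := by
    have := qInt_add q (b + 1) (a + 1)
    rw [show b + 1 + (a + 1) = a + b + 2 by omega] at this
    exact this
  have h1 : qInt q (a + 1) ≠ 0 := hq a
  have h2 : qInt q (b + 1) ≠ 0 := hq b
  have hFa : qFact q a ≠ 0 := qFact_ne_zero hq a
  have hFb : qFact q b ≠ 0 := qFact_ne_zero hq b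
  rw [show a + b + 2 = (a + b + 1) + 1 by omega, qFact_succ,
    show (a+b+1)+1 = a+b+2 by omega, key, qFact_succ q a, qFact_succ q b]
  field_simp

lemma choose_two_succ (k : ℕ) : Nat.choose (k + 2) 2 = Nat.choose (k + 1) 2 + (k + 1) := by
  rw [show k + 2 = (k+1) + 1 from rfl, Nat.choose_succ_succ, Nat.choose_one_right]
  norm_num
  omega

lemma qbinom {F : Type} [Field F] (q x : F) (hq : ∀ m : ℕ, qInt q (m + 1) ≠ 0) (n : ℕ) :
    ∏ i ∈ Finset.Icc 1 n, (1 + q ^ i * x) =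
      ∑ k ∈ Finset.range (n + 1),
        qFact q n / (qFact q k * qFact q (n - k)) * q ^ Nat.choose (k + 1) 2 * x ^ k := by
  induction n with
  | zero => simp [qFact]
  | succ n ih =>
    set A : ℕ → F := fun k => qFact q n / (qFact q k * qFact q (n - k)) * q ^ Nat.choose (k+1) 2 * x ^ k with hA
    set f : ℕ → F := fun k => qFact q (n+1) / (qFact q k * qFact q (n+1-k)) * q ^ Nat.choose (k+1) 2 * x ^ k with hf
    have hdiag : ∀ m : ℕ, qFact q m / (qFact q m * qFact q 0) = 1 := fun m => by
      rw [show qFact q 0 = 1 from rfl, mul_one, div_self (qFact_ne_zero hq m)]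
    have hq0 : qFact q 0 = 1 := by simp [qFact]
    have hA0 : A 0 = 1 := by
      simp only [hA]
      rw [Nat.sub_zero, show Nat.choose 1 2 = 0 from rfl, pow_zero, pow_zero, mul_one, mul_one,
        hq0, one_mul, div_self (qFact_ne_zero hq n)]
    have hf0 : f 0 = 1 := by
      simp only [hf]
      rw [Nat.sub_zero, show Nat.choose 1 2 = 0 from rfl, pow_zero, pow_zero, mul_one, mul_one,
        hq0, one_mul, div_self (qFact_ne_zero hq (n+1))]
    have hBn : A n * (q ^ (n+1) * x) = f (n+1) := by
      simp only [hA, hf, Nat.sub_self, hdiag, one_mul, Nat.add_sub_cancel_left,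
        Nat.add_sub_cancel]
      rw [choose_two_succ]
      ring
    have hmid : ∀ k ∈ Finset.range n, A (k+1) + A k * (q ^ (n+1) * x) = f (k+1) := by
      intro k hk
      rw [Finset.mem_range] at hk
      obtain ⟨b, hb⟩ : ∃ b, n = k + b + 1 := ⟨n - k - 1, by omega⟩
      subst hb
      simp only [hA, hf]
      rw [show k + b + 1 + 1 - (k + 1) = b + 1 by omega, show k + b + 1 - (k + 1) = b by omega,
        show k + b + 1 - k = b + 1 by omega, show k + b + 1 + 1 = k + b + 2 by omega,
        gauss_pascal hq k b, choose_two_succ]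
      ring
    rw [Finset.prod_Icc_succ_top (by omega : 1 ≤ n + 1), ih, mul_add, mul_one, Finset.sum_mul]
    rw [Finset.sum_range_succ' A n, Finset.sum_range_succ (fun k => A k * (q ^ (n+1) * x)) n,
      Finset.sum_range_succ' f (n+1), Finset.sum_range_succ (fun k => f (k+1)) n]
    rw [hA0, hf0, ← hBn, ← Finset.sum_congr rfl hmid, Finset.sum_add_distrib]
    ring

open RatFunc in
lemma hq_main : ∀ m : ℕ, qInt (RatFunc.C (RatFunc.X : RatFunc ℚ) : RatFunc (RatFunc ℚ)) (m + 1) ≠ 0 := by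
  intro m
  have h1 : (qInt (RatFunc.C (RatFunc.X : RatFunc ℚ)) (m+1) : RatFunc (RatFunc ℚ))
      = RatFunc.C (qInt (RatFunc.X : RatFunc ℚ) (m+1)) := by
    simp [qInt, map_sum, map_pow]
  rw [h1]
  have h2 : (qInt (RatFunc.X : RatFunc ℚ) (m+1))
      = algebraMap (Polynomial ℚ) _ (∑ i ∈ Finset.range (m+1), Polynomial.X ^ i) := by
    simp [qInt, map_sum, map_pow, RatFunc.algebraMap_X]
  have hp : (∑ i ∈ Finset.range (m+1), (Polynomial.X : Polynomial ℚ) ^ i) ≠ 0 := by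
    intro h
    have := congrArg (Polynomial.eval 1) h
    simp [Polynomial.eval_finset_sum] at this
    exact absurd this (by positivity)
  have h3 : (qInt (RatFunc.X : RatFunc ℚ) (m+1)) ≠ 0 := by
    rw [h2]
    exact fun h => hp (RatFunc.algebraMap_injective ℚ (by simpa using h))
  exact fun h => h3 (RatFunc.C.injective (by simpa using h))

/-- q-binomial theorem. -/
theorem stmt19 (n : ℕ) :
    (∏ i ∈ Finset.Icc 1 n,
        (1 + (RatFunc.C 𝕢 : RatFunc (RatFunc ℚ)) ^ i * RatFunc.X)) =
      ∑ k ∈ Finset.range (n + 1),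
        qFact (RatFunc.C 𝕢 : RatFunc (RatFunc ℚ)) n /
            (qFact (RatFunc.C 𝕢) k * qFact (RatFunc.C 𝕢) (n - k))
          * (RatFunc.C 𝕢) ^ Nat.choose (k + 1) 2 * RatFunc.X ^ k := by
  exact qbinom _ _ hq_main n

end Statements
end
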